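/- arXiv:1402.4184 — 8 statements merged into one kernel-verified Lean document; each statement's English description precedes it below -/
import Mathlib

section
/- Let G be a countable group, let G ↷ X be a Borel action on a standard Borel space X, and let μ be a G-quasi-invariant Borel probability measure on X. Then the set B_μ of Borel sets A ⊆ X for which there exists a G-invariant μ-conull Borel set X₀ ⊆ X such that for all x ∈ X₀ and g ∈ G, f_A(g·x) = f_A(x) implies g·x = x (i.e., f_A is class-bijective on some G-invariant conull set) is a G_δ set (a countable intersection of open sets) in the pseudometric space of Borel subsets of X with pseudometric d(A,B) = μ(A Δ B). -/
open MeasureTheory Set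
open scoped ENNReal

section Aux

variable {G : Type*} [Group G] {X : Type*} [MulAction G X]

/-- The "bad set" for `g` with finitely many conditions indexed by `i < n`. -/
def EsetCB (e : ℕ → G) (g : G) (n : ℕ) (A : Set X) : Set X :=
  {x | (∀ i, i < n → ((e i)⁻¹ • (g • x) ∈ A ↔ (e i)⁻¹ • x ∈ A)) ∧ g • x ≠ x}

/-- The full "bad set" for `g`. -/
def FsetCB (g : G) (A : Set X) : Set X :=
  {x | (∀ h : G, (h⁻¹ • (g • x) ∈ A ↔ h⁻¹ • x ∈ A)) ∧ g • x ≠ x}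

lemma EsetCB_antitone (e : ℕ → G) (g : G) (A : Set X) :
    Antitone (fun n => EsetCB e g n A) := by
  intro m n hmn x hx
  exact ⟨fun i hi => hx.1 i (hi.trans_le hmn), hx.2⟩

lemma iInter_EsetCB {e : ℕ → G} (he : Function.Surjective e) (g : G) (A : Set X) :
    ⋂ n, EsetCB e g n A = FsetCB g A := by
  ext x
  simp only [mem_iInter, EsetCB, FsetCB, mem_setOf_eq]
  constructor
  · intro hx
    refine ⟨fun h => ?_, (hx 0).2⟩
    obtain ⟨i, rfl⟩ := he h
    exact (hx (i + 1)).1 i (Nat.lt_succ_self i)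
  · intro hx n
    exact ⟨fun i _ => hx.1 (e i), hx.2⟩

lemma FsetCB_subset_EsetCB (e : ℕ → G) (g : G) (n : ℕ) (A : Set X) :
    FsetCB g A ⊆ EsetCB e g n A := by
  intro x hx
  exact ⟨fun i _ => hx.1 (e i), hx.2⟩

variable [MeasurableSpace X] [StandardBorelSpace X]

lemma neq_measCB (hBorel : ∀ g : G, Measurable fun x : X => g • x) (g : G) :
    MeasurableSet {x : X | g • x ≠ x} := by
  letI := upgradeStandardBorel X
  exact ((hBorel g).stronglyMeasurable.measurableSet_eq_fun
    stronglyMeasurable_id).compl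

lemma EsetCB_meas (hBorel : ∀ g : G, Measurable fun x : X => g • x)
    (e : ℕ → G) (g : G) (n : ℕ) {A : Set X} (hA : MeasurableSet A) :
    MeasurableSet (EsetCB e g n A) := by
  have h1 : ∀ c : G, MeasurableSet ((fun x : X => c • x) ⁻¹' A) := fun c => (hBorel c) hA
  have key : EsetCB e g n A = (⋂ i, ⋂ _ : i < n,
      (((fun x : X => ((e i)⁻¹ * g) • x) ⁻¹' A ∩ (fun x : X => (e i)⁻¹ • x) ⁻¹' A) ∪
       (((fun x : X => ((e i)⁻¹ * g) • x) ⁻¹' A)ᶜ ∩ ((fun x : X => (e i)⁻¹ • x) ⁻¹' A)ᶜ)))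
      ∩ {x | g • x ≠ x} := by
    ext x
    simp only [EsetCB, mem_setOf_eq, mem_inter_iff, mem_iInter, mem_union,
      mem_preimage, mem_compl_iff, mul_smul]
    constructor
    · rintro ⟨h1, h2⟩
      exact ⟨fun i hi => by have := h1 i hi; tauto, h2⟩
    · rintro ⟨h1, h2⟩
      exact ⟨fun i hi => by have := h1 i hi; tauto, h2⟩
  rw [key]
  exact (MeasurableSet.iInter fun i => MeasurableSet.iInter fun _ =>
    ((h1 _).inter (h1 _)).union (((h1 _).compl).inter ((h1 _).compl))).inter
    (neq_measCB hBorel g)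

lemma FsetCB_meas (hBorel : ∀ g : G, Measurable fun x : X => g • x)
    (e : ℕ → G) (he : Function.Surjective e) (g : G) {A : Set X} (hA : MeasurableSet A) :
    MeasurableSet (FsetCB g A) := by
  rw [← iInter_EsetCB he]
  exact MeasurableSet.iInter fun n => EsetCB_meas hBorel e g n hA

omit [StandardBorelSpace X] in
/-- Quantitative absolute continuity for a translate. -/
lemma translate_smallCB [Countable G]
    (hBorel : ∀ g : G, Measurable fun x : X => g • x)
    (μ : Measure X) [IsProbabilityMeasure μ]
    (hqi : ∀ (g : G) (A : Set X), MeasurableSet A →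
      (μ ((fun x => g • x) '' A) = 0 ↔ μ A = 0))
    (c : G) {δ : ℝ≥0∞} (hδ : δ ≠ 0) :
    ∃ ε > 0, ∀ D : Set X, MeasurableSet D → μ D < ε →
      μ ((fun x => c • x) ⁻¹' D) < δ := by
  have hpre : ∀ D : Set X, (fun x => c • x) ⁻¹' D = (fun x => c⁻¹ • x) '' D := by
    intro D
    ext x
    constructor
    · intro hx; exact ⟨c • x, hx, by simp⟩
    · rintro ⟨y, hy, rfl⟩; simpa using hy
  set ν : Measure X := μ.map (fun x => c • x) with hν
  have hmap : ∀ D : Set X, MeasurableSet D → ν D = μ ((fun x => c • x) ⁻¹' D) := by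
    intro D hD
    rw [hν, Measure.map_apply (hBorel c) hD]
  have hac : ν ≪ μ := by
    refine Measure.AbsolutelyContinuous.mk fun S hS hS0 => ?_
    rw [hmap S hS, hpre S]
    exact (hqi c⁻¹ S hS).mpr hS0
  have : IsProbabilityMeasure ν := Measure.isProbabilityMeasure_map (hBorel c).aemeasurable
  have hfin : ∫⁻ x, ν.rnDeriv μ x ∂μ ≠ ∞ := by
    rw [Measure.lintegral_rnDeriv hac]
    simp
  obtain ⟨ε, hε, h⟩ := exists_pos_setLIntegral_lt_of_measure_lt (μ := μ) hfin hδ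
  refine ⟨ε, hε, fun D hD hDε => ?_⟩
  have := h D hDε
  rwa [Measure.setLIntegral_rnDeriv hac D, hmap D hD] at this

omit [StandardBorelSpace X] in
/-- Openness: if `μ (EsetCB e g n A) < b`, the same holds for all `B` close to `A`. -/
lemma EsetCB_open [Countable G]
    (hBorel : ∀ g : G, Measurable fun x : X => g • x)
    (μ : Measure X) [IsProbabilityMeasure μ]
    (hqi : ∀ (g : G) (A : Set X), MeasurableSet A →
      (μ ((fun x => g • x) '' A) = 0 ↔ μ A = 0))
    (e : ℕ → G) (g : G) (n : ℕ) {A : Set X} (hA : MeasurableSet A)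
    {b : ℝ≥0∞} (hb : μ (EsetCB e g n A) < b) :
    ∃ ε : ℝ≥0∞, 0 < ε ∧ ∀ B : Set X, MeasurableSet B →
      μ (symmDiff A B) < ε → μ (EsetCB e g n B) < b := by
  obtain ⟨r, hr0, hr⟩ := ENNReal.lt_iff_exists_add_pos_lt.mp hb
  set η : ℝ≥0∞ := (r : ℝ≥0∞) / (2 * n + 1) with hη
  have hη0 : η ≠ 0 := by
    apply (ENNReal.div_pos (by exact_mod_cast hr0.ne') (by finiteness)).ne'
  -- choose ε's for each translate
  have H : ∀ c : G, ∃ ε > 0, ∀ D : Set X, MeasurableSet D → μ D < ε →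
      μ ((fun x => c • x) ⁻¹' D) < η := fun c => translate_smallCB hBorel μ hqi c hη0
  choose εf hεf hP using H
  set ε : ℝ≥0∞ := (Finset.range n).inf fun i => min (εf ((e i)⁻¹ * g)) (εf ((e i)⁻¹)) with hεdef
  have hε0 : 0 < ε := by
    rw [hεdef]
    refine (Finset.lt_inf_iff (by exact ENNReal.zero_lt_top)).mpr fun i _ =>
      lt_min (hεf _) (hεf _)
  refine ⟨ε, hε0, fun B hB hAB => ?_⟩
  set D : Set X := symmDiff A B with hD
  have hDmeas : MeasurableSet D := hA.symmDiff hB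
  have hS1 : ∀ i ∈ Finset.range n, μ ((fun x : X => ((e i)⁻¹ * g) • x) ⁻¹' D) < η := by
    intro i hi
    refine hP _ D hDmeas (hAB.trans_le ?_)
    exact ((Finset.inf_le hi).trans (min_le_left _ _))
  have hS2 : ∀ i ∈ Finset.range n, μ ((fun x : X => (e i)⁻¹ • x) ⁻¹' D) < η := by
    intro i hi
    refine hP _ D hDmeas (hAB.trans_le ?_)
    exact ((Finset.inf_le hi).trans (min_le_right _ _))
  have hsub : EsetCB e g n B ⊆ EsetCB e g n A ∪
      ⋃ i ∈ Finset.range n, ((fun x : X => ((e i)⁻¹ * g) • x) ⁻¹' D ∪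
        (fun x : X => (e i)⁻¹ • x) ⁻¹' D) := by
    intro x hx
    by_cases hxA : x ∈ EsetCB e g n A
    · exact Or.inl hxA
    · right
      have hne : g • x ≠ x := hx.2
      have : ¬ ∀ i, i < n → ((e i)⁻¹ • (g • x) ∈ A ↔ (e i)⁻¹ • x ∈ A) := by
        intro hall
        exact hxA ⟨hall, hne⟩
      push_neg at this
      obtain ⟨i, hi, hiff⟩ := this
      have hBiff := hx.1 i hi
      simp only [mem_iUnion, mem_union, mem_preimage, Finset.mem_range, mul_smul]
      refine ⟨i, hi, ?_⟩
      rw [hD]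
      simp only [Set.mem_symmDiff]
      tauto
  have key : (↑n : ℝ≥0∞) * (η + η) ≤ r := by
    have h1 : (↑n : ℝ≥0∞) * (η + η) = (2 * n) * η := by ring
    rw [h1, hη]
    calc (2 * ↑n : ℝ≥0∞) * ((r : ℝ≥0∞) / (2 * ↑n + 1))
        ≤ (2 * ↑n + 1) * ((r : ℝ≥0∞) / (2 * ↑n + 1)) := by gcongr; exact le_self_add
      _ ≤ r := ENNReal.mul_div_le
  calc μ (EsetCB e g n B)
      ≤ μ (EsetCB e g n A ∪ ⋃ i ∈ Finset.range n,
          ((fun x : X => ((e i)⁻¹ * g) • x) ⁻¹' D ∪ (fun x : X => (e i)⁻¹ • x) ⁻¹' D)) :=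
        measure_mono hsub
    _ ≤ μ (EsetCB e g n A) + μ (⋃ i ∈ Finset.range n,
          ((fun x : X => ((e i)⁻¹ * g) • x) ⁻¹' D ∪ (fun x : X => (e i)⁻¹ • x) ⁻¹' D)) :=
        measure_union_le _ _
    _ ≤ μ (EsetCB e g n A) + ∑ i ∈ Finset.range n,
          μ ((fun x : X => ((e i)⁻¹ * g) • x) ⁻¹' D ∪ (fun x : X => (e i)⁻¹ • x) ⁻¹' D) := by
        gcongr
        exact measure_biUnion_finset_le _ _
    _ ≤ μ (EsetCB e g n A) + ∑ i ∈ Finset.range n, (η + η) := by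
        gcongr with i hi
        exact (measure_union_le _ _).trans (add_le_add (hS1 i hi).le (hS2 i hi).le)
    _ = μ (EsetCB e g n A) + (↑n : ℝ≥0∞) * (η + η) := by
        rw [Finset.sum_const, Finset.card_range, nsmul_eq_mul]
    _ ≤ μ (EsetCB e g n A) + r := by gcongr
    _ < b := hr

end Aux

/-- Proposition 3.1 (`Gδ`-ness of the class-bijective sets): for a Borel action `G ↷ X`
with a `G`-quasi-invariant Borel probability measure `μ`, the collection `B_μ` of Borel sets
`A ⊆ X` such that the induced equivariant map `f_A : X → 2^G` is class-bijective on some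
`G`-invariant conull set is a `Gδ` subset of the pseudometric space of Borel subsets of `X`
with pseudometric `d(A,B) = μ (A Δ B)`:  it is the intersection of a sequence of sets `U n`
of Borel sets, each of which is open in the sense that it contains a `d`-ball around each of
its members. -/
theorem classBijective_sets_Gdelta
    {G : Type*} [Group G] [Countable G]
    {X : Type*} [MeasurableSpace X] [StandardBorelSpace X] [MulAction G X]
    (hBorel : ∀ g : G, Measurable fun x : X => g • x)
    (μ : Measure X) [IsProbabilityMeasure μ]
    (hqi : ∀ (g : G) (A : Set X), MeasurableSet A →
      (μ ((fun x => g • x) '' A) = 0 ↔ μ A = 0)) :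
    ∃ U : ℕ → Set (Set X),
      (∀ n, ∀ A ∈ U n, MeasurableSet A ∧
        ∃ ε : ℝ≥0∞, 0 < ε ∧
          ∀ B : Set X, MeasurableSet B → μ (symmDiff A B) < ε → B ∈ U n) ∧
      (∀ A : Set X, MeasurableSet A →
        ((∀ n, A ∈ U n) ↔
          ∃ X₀ : Set X, MeasurableSet X₀ ∧
            (∀ g : G, (fun x => g • x) '' X₀ ⊆ X₀) ∧ μ X₀ᶜ = 0 ∧
            ∀ x ∈ X₀, ∀ g : G,
              (∀ h : G, (h⁻¹ • (g • x) ∈ A ↔ h⁻¹ • x ∈ A)) → g • x = x)) := by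
  obtain ⟨e, he⟩ := exists_surjective_nat G
  obtain ⟨σ, hσ⟩ := exists_surjective_nat (G × ℕ)
  refine ⟨fun m => {A | MeasurableSet A ∧
    ∃ n, μ (EsetCB e (σ m).1 n A) < (((σ m).2 : ℝ≥0∞) + 1)⁻¹}, ?_, ?_⟩
  · -- openness
    rintro m A ⟨hA, n, hn⟩
    refine ⟨hA, ?_⟩
    obtain ⟨ε, hε0, hball⟩ := EsetCB_open hBorel μ hqi e (σ m).1 n hA hn
    exact ⟨ε, hε0, fun B hB hAB => ⟨hB, n, hball B hB hAB⟩⟩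
  · -- characterization
    intro A hA
    constructor
    · -- forward: all U's → invariant conull free set
      intro hAll
      have hU : ∀ (g : G) (k : ℕ), ∃ n, μ (EsetCB e g n A) < ((k : ℝ≥0∞) + 1)⁻¹ := by
        intro g k
        obtain ⟨m, hm⟩ := hσ (g, k)
        have := (hAll m).2
        rw [hm] at this
        exact this
      have hF0 : ∀ g : G, μ (FsetCB g A) = 0 := by
        intro g
        by_contra h0
        obtain ⟨k, hk⟩ := ENNReal.exists_inv_nat_lt h0
        obtain ⟨n, hn⟩ := hU g k
        have h1 : μ (FsetCB g A) < ((k : ℝ≥0∞) + 1)⁻¹ :=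
          (measure_mono (FsetCB_subset_EsetCB e g n A)).trans_lt hn
        have h2 : ((k : ℝ≥0∞) + 1)⁻¹ ≤ ((k : ℝ≥0∞))⁻¹ :=
          ENNReal.inv_le_inv.mpr le_self_add
        exact absurd hk ((h1.trans_le h2).asymm)
      set Sat : Set X := ⋃ (g : G), ⋃ (h : G), (fun x => h • x) '' (FsetCB g A) with hSat
      have himg : ∀ (h : G) (S : Set X),
          (fun x => h • x) '' S = (fun x => h⁻¹ • x) ⁻¹' S := by
        intro h S
        ext x
        constructor
        · rintro ⟨y, hy, rfl⟩; simpa using hy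
        · intro hx; exact ⟨h⁻¹ • x, hx, by simp⟩
      have hSatMeas : MeasurableSet Sat := by
        refine MeasurableSet.iUnion fun g => MeasurableSet.iUnion fun h => ?_
        rw [himg]
        exact (hBorel h⁻¹) (FsetCB_meas hBorel e he g hA)
      have hSat0 : μ Sat = 0 := by
        refine measure_iUnion_null fun g => measure_iUnion_null fun h => ?_
        exact (hqi h _ (FsetCB_meas hBorel e he g hA)).mpr (hF0 g)
      have hSatInv : ∀ (g : G) (x : X), x ∈ Sat → g • x ∈ Sat := by
        intro g x hx
        simp only [hSat, mem_iUnion] at hx ⊢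
        obtain ⟨g', h, y, hy, hyx⟩ := hx
        exact ⟨g', g * h, y, hy, by show (g * h) • y = g • x; rw [mul_smul]; exact congrArg (fun z => g • z) hyx⟩
      refine ⟨Satᶜ, hSatMeas.compl, ?_, by rwa [compl_compl], ?_⟩
      · rintro g _ ⟨x, hx, rfl⟩
        intro hmem
        exact hx (by simpa using hSatInv g⁻¹ _ hmem)
      · intro x hx g hcond
        by_contra hne
        refine hx ?_
        simp only [hSat, mem_iUnion]
        exact ⟨g, 1, x, ⟨hcond, hne⟩, one_smul _ _⟩
    · -- backward: invariant conull free set → all U's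
      rintro ⟨X₀, hX₀m, hinv, hnull, hfree⟩ m
      refine ⟨hA, ?_⟩
      set g := (σ m).1
      set k := (σ m).2
      have hF0 : μ (FsetCB g A) = 0 := by
        refine measure_mono_null (fun x hx => ?_) hnull
        intro hxX₀
        exact hx.2 (hfree x hxX₀ g hx.1)
      have htend : Filter.Tendsto (fun n => μ (EsetCB e g n A)) Filter.atTop (nhds 0) := by
        have := tendsto_measure_iInter_atTop (μ := μ)
          (fun n => (EsetCB_meas hBorel e g n hA).nullMeasurableSet)
          (EsetCB_antitone e g A) ⟨0, measure_ne_top μ _⟩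
        rwa [iInter_EsetCB he, hF0] at this
      have hpos : (0 : ℝ≥0∞) < ((k : ℝ≥0∞) + 1)⁻¹ :=
        ENNReal.inv_pos.mpr (by finiteness)
      exact (htend.eventually_lt_const hpos).exists
end

section
/- Let L = (R_i)_{i∈I} be a countable relational language (R_i of arity n_i) and let K be a class of countable L-structures closed under isomorphism. Let E and F be countable Borel equivalence relations on standard Borel spaces X and Y respectively, and suppose there exists a class-bijective Borel homomorphism f : X → Y from E to F. If F is Borel K-structurable, then E is Borel K-structurable. -/
open MeasureTheory Set

universe u

/-- `E` is Borel `K`-structurable, where the countable relational language has relation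
symbols indexed by `I` with arities `n i`, and `K α R` expresses that the `L`-structure with
(countable) carrier `α` and interpretations `R` belongs to the class `K`:  there are Borel
sets `Q i` of `E`-equivalent `n i`-tuples such that each `E`-class, equipped with the
restricted relations, is a structure in `K`. -/
def BorelStructurable {I : Type} (n : I → ℕ)
    (K : (α : Type u) → ((i : I) → (Fin (n i) → α) → Prop) → Prop)
    {X : Type u} [MeasurableSpace X] (E : X → X → Prop) : Prop :=
  ∃ Q : (i : I) → Set (Fin (n i) → X),
    (∀ i, MeasurableSet (Q i)) ∧
    (∀ i, ∀ t ∈ Q i, ∀ j k, E (t j) (t k)) ∧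
    ∀ x : X, K {y : X // E x y} (fun i t => (fun j => ((t j : X))) ∈ Q i)

/-- Proposition 2.1: Borel `K`-structurability pulls back through class-bijective Borel
homomorphisms of countable Borel equivalence relations, for any isomorphism-closed class `K`
of countable structures in a countable relational language. -/
theorem structurable_of_classBijective_hom
    {I : Type} [Countable I] (n : I → ℕ)
    (K : (α : Type u) → ((i : I) → (Fin (n i) → α) → Prop) → Prop)
    (hKiso : ∀ (α β : Type u)
      (Rα : (i : I) → (Fin (n i) → α) → Prop) (Rβ : (i : I) → (Fin (n i) → β) → Prop)
      (e : α ≃ β), (∀ i t, Rα i t ↔ Rβ i (fun j => e (t j))) → (K α Rα ↔ K β Rβ))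
    {X Y : Type u} [MeasurableSpace X] [StandardBorelSpace X]
    [MeasurableSpace Y] [StandardBorelSpace Y]
    (E : X → X → Prop) (F : Y → Y → Prop)
    (hE : Equivalence E) (hF : Equivalence F)
    (hEmeas : MeasurableSet {p : X × X | E p.1 p.2})
    (hFmeas : MeasurableSet {p : Y × Y | F p.1 p.2})
    (hEcntble : ∀ x : X, Set.Countable {x' | E x x'})
    (hFcntble : ∀ y : Y, Set.Countable {y' | F y y'})
    (f : X → Y) (hf : Measurable f)
    (hhom : ∀ x x' : X, E x x' → F (f x) (f x'))
    (hcb : ∀ x : X, Set.BijOn f {x' | E x x'} {y | F (f x) y})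
    (hFstr : BorelStructurable n K F) :
    BorelStructurable n K E := by
  obtain ⟨Q, hQmeas, hQE, hQK⟩ := hFstr
  refine ⟨fun i => {t | (∀ j k, E (t j) (t k)) ∧ (fun j => f (t j)) ∈ Q i}, ?_, ?_, ?_⟩
  · intro i
    have h1 : MeasurableSet {t : Fin (n i) → X | ∀ j k, E (t j) (t k)} := by
      have : {t : Fin (n i) → X | ∀ j k, E (t j) (t k)} =
          ⋂ j, ⋂ k, (fun t : Fin (n i) → X => (t j, t k)) ⁻¹' {p : X × X | E p.1 p.2} := by
        ext t; simp [Set.mem_iInter]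
      rw [this]
      exact MeasurableSet.iInter fun j => MeasurableSet.iInter fun k =>
        hEmeas.preimage ((measurable_pi_apply j).prodMk (measurable_pi_apply k))
    have h2 : MeasurableSet ((fun (t : Fin (n i) → X) (j : Fin (n i)) => f (t j)) ⁻¹' Q i) :=
      (hQmeas i).preimage (measurable_pi_lambda _ fun j => hf.comp (measurable_pi_apply j))
    exact h1.inter h2
  · exact fun i t ht j k => ht.1 j k
  · intro x
    have hbij : Function.Bijective
        (fun a : {y : X // E x y} => (⟨f a, hhom x a a.2⟩ : {z : Y // F (f x) z})) := by
      constructor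
      · intro a b hab
        exact Subtype.ext ((hcb x).injOn a.2 b.2 (congrArg Subtype.val hab))
      · intro z
        obtain ⟨w, hw, hfw⟩ := (hcb x).surjOn z.2
        exact ⟨⟨w, hw⟩, Subtype.ext hfw⟩
    refine (hKiso _ _ _ _ (Equiv.ofBijective _ hbij) ?_).mpr (hQK (f x))
    intro i t
    constructor
    · intro ht
      exact ht.2
    · intro ht
      exact ⟨fun j k => hE.trans (hE.symm (t j).2) (t k).2, ht⟩
end

section
/- Let G be a countably infinite discrete group and let G ↷ X be a free Borel action on a standard Borel space X. If P ⊆ X is a syndetic Borel subset of X, then there exists a Borel set M ⊆ P such that both M and P \ M are syndetic. -/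
open MeasureTheory Set Pointwise


lemma exists_sep_seq (X : Type*) [MeasurableSpace X] [StandardBorelSpace X] :
    ∃ e : ℕ → Set X, (∀ n, MeasurableSet (e n)) ∧
      ∀ x y : X, x ≠ y → ∃ n, ¬(x ∈ e n ↔ y ∈ e n) := by
  obtain ⟨f, hf⟩ := exists_measurableEmbedding_real X
  obtain ⟨q, hq⟩ := exists_surjective_nat (ℚ × ℚ)
  refine ⟨fun n => f ⁻¹' Set.Ioo ((q n).1 : ℝ) ((q n).2 : ℝ),
    fun n => hf.measurable measurableSet_Ioo, ?_⟩
  have key : ∀ r s : ℝ, r < s → ∃ a b : ℚ, r ∈ Set.Ioo (a:ℝ) (b:ℝ) ∧ s ∉ Set.Ioo (a:ℝ) (b:ℝ) := by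
    intro r s hrs
    obtain ⟨a, ha⟩ := exists_rat_lt r
    obtain ⟨b, hb1, hb2⟩ := exists_rat_btwn hrs
    exact ⟨a, b, ⟨ha, hb1⟩, fun h => absurd h.2 (not_lt.2 hb2.le)⟩
  intro x y hxy
  have hne : f x ≠ f y := fun h => hxy (hf.injective h)
  rcases hne.lt_or_gt with h | h
  · obtain ⟨a, b, h1, h2⟩ := key _ _ h
    obtain ⟨n, hn⟩ := hq (a, b)
    exact ⟨n, by simp only [Set.mem_preimage, hn]; tauto⟩
  · obtain ⟨a, b, h1, h2⟩ := key _ _ h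
    obtain ⟨n, hn⟩ := hq (a, b)
    exact ⟨n, by simp only [Set.mem_preimage, hn]; tauto⟩

lemma exists_discrete_partition {G X : Type*} [Group G] [MeasurableSpace X]
    [StandardBorelSpace X] [MulAction G X]
    (hBorel : ∀ g : G, Measurable fun x : X => g • x)
    (hfree : ∀ (g : G) (x : X), g • x = x → g = 1) (K : Finset G) :
    ∃ A : ℕ → Set X, (∀ n, MeasurableSet (A n)) ∧ (∀ x, ∃ n, x ∈ A n) ∧
      ∀ n, ∀ x ∈ A n, ∀ k ∈ K, k ≠ 1 → k • x ∉ A n := by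
  classical
  obtain ⟨e, he, hsep⟩ := exists_sep_seq X
  set ι := ({k // k ∈ K} → ℕ × Bool) with hι
  let B : ι → Set X := fun v => {x | ∀ k : {k // k ∈ K}, k.1 ≠ 1 →
    (¬(x ∈ e (v k).1 ↔ k.1 • x ∈ e (v k).1)) ∧ (x ∈ e (v k).1 ↔ (v k).2 = true)}
  obtain ⟨c, hc⟩ := exists_surjective_nat ι
  refine ⟨fun n => B (c n), ?_, ?_, ?_⟩
  · intro n
    have : B (c n) = ⋂ k : {k // k ∈ K}, {x : X | k.1 ≠ 1 →
        (¬(x ∈ e ((c n) k).1 ↔ k.1 • x ∈ e ((c n) k).1) ∧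
          (x ∈ e ((c n) k).1 ↔ ((c n) k).2 = true))} := by
      ext x; simp only [Set.mem_iInter, Set.mem_setOf_eq, B]
    show MeasurableSet (B (c n))
    rw [this]
    refine MeasurableSet.iInter fun k => ?_
    by_cases hk : k.1 = 1
    · have : {x : X | k.1 ≠ 1 → (¬(x ∈ e ((c n) k).1 ↔ k.1 • x ∈ e ((c n) k).1) ∧
          (x ∈ e ((c n) k).1 ↔ ((c n) k).2 = true))} = Set.univ := by
        ext x; simp [hk]
      rw [this]; exact MeasurableSet.univ
    · have h1 : MeasurableSet (e ((c n) k).1) := he _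
      have h2 : MeasurableSet ((fun x : X => k.1 • x) ⁻¹' e ((c n) k).1) :=
        (hBorel k.1) (he _)
      by_cases hb : ((c n) k).2 = true
      · have : {x : X | k.1 ≠ 1 → (¬(x ∈ e ((c n) k).1 ↔ k.1 • x ∈ e ((c n) k).1) ∧
            (x ∈ e ((c n) k).1 ↔ ((c n) k).2 = true))} =
            e ((c n) k).1 \ ((fun x : X => k.1 • x) ⁻¹' e ((c n) k).1) := by
          ext x
          simp only [Set.mem_setOf_eq, Set.mem_diff, Set.mem_preimage, hb, hk]
          tauto
        rw [this]; exact h1.diff h2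
      · have : {x : X | k.1 ≠ 1 → (¬(x ∈ e ((c n) k).1 ↔ k.1 • x ∈ e ((c n) k).1) ∧
            (x ∈ e ((c n) k).1 ↔ ((c n) k).2 = true))} =
            ((fun x : X => k.1 • x) ⁻¹' e ((c n) k).1) \ e ((c n) k).1 := by
          ext x
          simp only [Set.mem_setOf_eq, Set.mem_diff, Set.mem_preimage, hb, hk]
          tauto
        rw [this]; exact h2.diff h1
  · intro x
    have hv : ∀ k : {k // k ∈ K}, k.1 ≠ 1 → ∃ n, ¬(x ∈ e n ↔ k.1 • x ∈ e n) := by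
      intro k hk
      have hne : x ≠ k.1 • x := fun h => hk (hfree k.1 x h.symm)
      exact hsep x (k.1 • x) hne
    let v : ι := fun k => if hk : k.1 = 1 then (0, true) else
      ((hv k hk).choose, if x ∈ e (hv k hk).choose then true else false)
    obtain ⟨n, hn⟩ := hc v
    refine ⟨n, ?_⟩
    show x ∈ B (c n)
    rw [hn]
    intro k hk
    have hch := (hv k hk).choose_spec
    constructor
    · simpa only [v, dif_neg hk] using hch
    · simp only [v, dif_neg hk]
      split_ifs with h <;> simp [h]
  · intro n x hx k hkK hk1 hy
    have h1 := hx ⟨k, hkK⟩ hk1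
    have h2 := hy ⟨k, hkK⟩ hk1
    exact h1.1 (h1.2.trans h2.2.symm)

lemma exists_max_discrete {G X : Type*} [Group G] [MeasurableSpace X] [MulAction G X]
    (hBorel : ∀ g : G, Measurable fun x : X => g • x)
    (K : Finset G) (hKsym : ∀ k ∈ K, k⁻¹ ∈ K) (hK1 : (1:G) ∈ K)
    (A : ℕ → Set X) (hAm : ∀ n, MeasurableSet (A n)) (hAcov : ∀ x, ∃ n, x ∈ A n)
    (hAdis : ∀ n, ∀ x ∈ A n, ∀ k ∈ K, k ≠ 1 → k • x ∉ A n) :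
    ∃ D : Set X, MeasurableSet D ∧ (∀ x ∈ D, ∀ k ∈ K, k ≠ 1 → k • x ∉ D) ∧
      ∀ x : X, ∃ k ∈ K, k⁻¹ • x ∈ D := by
  classical
  let Dn : ℕ → Set X := fun n =>
    Nat.rec (A 0) (fun m Dm => Dm ∪ (A (m+1) \ {x | ∃ k ∈ K, k⁻¹ • x ∈ Dm})) n
  have hDs : ∀ m, Dn (m+1) = Dn m ∪ (A (m+1) \ {x | ∃ k ∈ K, k⁻¹ • x ∈ Dn m}) :=
    fun m => rfl
  have hDnm : ∀ n, MeasurableSet (Dn n) := by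
    intro n
    induction n with
    | zero => exact hAm 0
    | succ m ih =>
      rw [hDs]
      have hsat : MeasurableSet {x : X | ∃ k ∈ K, k⁻¹ • x ∈ Dn m} := by
        have : {x : X | ∃ k ∈ K, k⁻¹ • x ∈ Dn m} =
            ⋃ k ∈ K, (fun x : X => k⁻¹ • x) ⁻¹' Dn m := by
          ext x; simp
        rw [this]
        exact K.measurableSet_biUnion fun k _ => (hBorel k⁻¹) ih
      exact ih.union ((hAm (m+1)).diff hsat)
  have hmono : Monotone Dn := monotone_nat_of_le_succ fun n => by
    rw [hDs]; exact Set.subset_union_left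
  have hdis : ∀ n, ∀ x ∈ Dn n, ∀ k ∈ K, k ≠ 1 → k • x ∉ Dn n := by
    intro n
    induction n with
    | zero => exact hAdis 0
    | succ m ih =>
      intro x hx k hkK hk1 hy
      rw [hDs] at hx hy
      rcases hx with hx | hx <;> rcases hy with hy | hy
      · exact ih x hx k hkK hk1 hy
      · exact hy.2 ⟨k, hkK, by rwa [inv_smul_smul]⟩
      · exact hx.2 ⟨k⁻¹, hKsym k hkK, by rwa [inv_inv]⟩
      · exact hAdis (m+1) x hx.1 k hkK hk1 hy.1
  refine ⟨⋃ n, Dn n, MeasurableSet.iUnion hDnm, ?_, ?_⟩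
  · intro x hx k hkK hk1 hy
    obtain ⟨m, hm⟩ := Set.mem_iUnion.1 hx
    obtain ⟨n, hn⟩ := Set.mem_iUnion.1 hy
    exact hdis (max m n) x (hmono (le_max_left m n) hm) k hkK hk1
      (hmono (le_max_right m n) hn)
  · intro x
    obtain ⟨n, hn⟩ := hAcov x
    by_cases hx : x ∈ ⋃ n, Dn n
    · exact ⟨1, hK1, by simpa using hx⟩
    · have hx' : ∀ m, x ∉ Dn m := fun m hm => hx (Set.mem_iUnion.2 ⟨m, hm⟩)
      cases n with
      | zero => exact absurd hn (hx' 0)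
      | succ m =>
        have := hx' (m+1)
        rw [hDs] at this
        have : x ∈ {x : X | ∃ k ∈ K, k⁻¹ • x ∈ Dn m} := by
          by_contra hmem
          exact this (Set.mem_union_right _ ⟨hn, hmem⟩)
        obtain ⟨k, hk, hkd⟩ := this
        exact ⟨k, hk, Set.mem_iUnion.2 ⟨m, hkd⟩⟩

/-- `M ⊆ X` is syndetic if `F • M = X` for some finite `F ⊆ G`. -/
def Syndetic {G X : Type*} [Group G] [MulAction G X] (M : Set X) : Prop :=
  ∃ F : Finset G, ∀ x : X, ∃ g ∈ F, g⁻¹ • x ∈ M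

/-- Proposition 3.4.(1): a syndetic Borel set `P` splits into a Borel set `M ⊆ P` such that
both `M` and `P \ M` are syndetic. -/
theorem syndetic_split
    {G : Type*} [Group G] [Countable G] [Infinite G]
    {X : Type*} [MeasurableSpace X] [StandardBorelSpace X] [MulAction G X]
    (hBorel : ∀ g : G, Measurable fun x : X => g • x)
    (hfree : ∀ (g : G) (x : X), g • x = x → g = 1)
    (P : Set X) (hP : MeasurableSet P) (hPsynd : Syndetic (G := G) P) :
    ∃ M : Set X, MeasurableSet M ∧ M ⊆ P ∧
      Syndetic (G := G) M ∧ Syndetic (G := G) (P \ M) := by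
  classical
  obtain ⟨F, hF⟩ := hPsynd
  obtain ⟨u, hu⟩ := Infinite.exists_notMem_finset (F * F⁻¹ * F * F⁻¹)
  set T : Finset G := {1, u} with hT
  set S : Finset G := T * F * F⁻¹ with hS
  set K : Finset G := insert 1 (S⁻¹ * S) with hK
  have hK1 : (1:G) ∈ K := Finset.mem_insert_self _ _
  have hKsym : ∀ k ∈ K, k⁻¹ ∈ K := by
    intro k hk
    rcases Finset.mem_insert.1 hk with h | h
    · rw [h, inv_one]; exact hK1
    · obtain ⟨a, ha, b, hb, hab⟩ := Finset.mem_mul.1 h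
      obtain ⟨s, hs, hsa⟩ := Finset.mem_inv.1 ha
      refine Finset.mem_insert_of_mem (Finset.mem_mul.2
        ⟨b⁻¹, Finset.inv_mem_inv hb, s, hs, ?_⟩)
      rw [← hab, ← hsa]
      group
  obtain ⟨A, hAm, hAcov, hAdis⟩ := exists_discrete_partition hBorel hfree K
  obtain ⟨D, hDm, hDdis, hDmax⟩ :=
    exists_max_discrete hBorel K hKsym hK1 A hAm hAcov hAdis
  set Q : Set X := {x | ∃ f ∈ F, f • x ∈ D} with hQ
  have hQm : MeasurableSet Q := by
    have : Q = ⋃ f ∈ F, (fun x : X => f • x) ⁻¹' D := by ext x; simp [hQ]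
    rw [this]
    exact F.measurableSet_biUnion fun f _ => (hBorel f) hDm
  refine ⟨P ∩ Q, hP.inter hQm, Set.inter_subset_left, ?_, ?_⟩
  · -- M is syndetic, with witnesses K * F
    refine ⟨K * F, fun x => ?_⟩
    obtain ⟨k, hk, hd⟩ := hDmax x
    obtain ⟨g, hg, hgP⟩ := hF (k⁻¹ • x)
    refine ⟨k * g, Finset.mul_mem_mul hk hg, ?_, ?_⟩
    · rwa [mul_inv_rev, mul_smul]
    · refine ⟨g, hg, ?_⟩
      rw [mul_inv_rev, mul_smul, smul_inv_smul]
      exact hd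
  · -- P \ M is syndetic, with witnesses T * F
    refine ⟨T * F, fun x => ?_⟩
    have h1T : (1:G) ∈ T := by simp [hT]
    have huT : u ∈ T := by simp [hT]
    obtain ⟨g1, hg1, hg1P⟩ := hF ((1:G)⁻¹ • x)
    obtain ⟨gu, hgu, hguP⟩ := hF (u⁻¹ • x)
    have hy1P : ((1 * g1 : G))⁻¹ • x ∈ P := by rwa [mul_inv_rev, mul_smul]
    have hyuP : ((u * gu : G))⁻¹ • x ∈ P := by rwa [mul_inv_rev, mul_smul]
    by_cases hy1 : ((1 * g1 : G))⁻¹ • x ∈ Q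
    · by_cases hyu : ((u * gu : G))⁻¹ • x ∈ Q
      · exfalso
        obtain ⟨f1, hf1, hd1⟩ := hy1
        obtain ⟨fu, hfu, hdu⟩ := hyu
        -- d1 = σ1⁻¹ • x with σ1 = 1 * g1 * f1⁻¹ ∈ S
        have hσ1 : f1 • ((1 * g1 : G))⁻¹ • x = ((1 * g1 * f1⁻¹ : G))⁻¹ • x := by
          rw [smul_smul]
          congr 1
          group
        have hσu : fu • ((u * gu : G))⁻¹ • x = ((u * gu * fu⁻¹ : G))⁻¹ • x := by
          rw [smul_smul]
          congr 1
          group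
        set σ1 : G := 1 * g1 * f1⁻¹ with hσ1def
        set σu : G := u * gu * fu⁻¹ with hσudef
        have hσ1S : σ1 ∈ S :=
          Finset.mul_mem_mul (Finset.mul_mem_mul h1T hg1) (Finset.inv_mem_inv hf1)
        have hσuS : σu ∈ S :=
          Finset.mul_mem_mul (Finset.mul_mem_mul huT hgu) (Finset.inv_mem_inv hfu)
        have hkK : σu⁻¹ * σ1 ∈ K :=
          Finset.mem_insert_of_mem (Finset.mul_mem_mul (Finset.inv_mem_inv hσuS) hσ1S)
        have hd1' : σ1⁻¹ • x ∈ D := by rwa [hσ1] at hd1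
        have hdu' : σu⁻¹ • x ∈ D := by rwa [hσu] at hdu
        have hsm : (σu⁻¹ * σ1) • (σ1⁻¹ • x) = σu⁻¹ • x := by
          rw [smul_smul]
          congr 1
          group
        by_cases hone : σu⁻¹ * σ1 = 1
        · -- then σ1 = σu, so u ∈ F * F⁻¹ * F * F⁻¹
          have hσeq : σ1 = σu := by
            have := mul_eq_one_iff_inv_eq.1 hone
            rw [inv_inv] at this
            exact this.symm
          apply hu
          have h' : (1:G) * g1 * f1⁻¹ = u * gu * fu⁻¹ := by
            rw [← hσ1def, ← hσudef, hσeq]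
          have h2 : u * gu * fu⁻¹ * fu * gu⁻¹ = u := by group
          have hueq : u = g1 * f1⁻¹ * fu * gu⁻¹ := by
            rw [← h2, ← h']
            group
          rw [hueq]
          exact Finset.mul_mem_mul (Finset.mul_mem_mul
            (Finset.mul_mem_mul hg1 (Finset.inv_mem_inv hf1)) hfu)
            (Finset.inv_mem_inv hgu)
        · exact hDdis (σ1⁻¹ • x) hd1' (σu⁻¹ * σ1) hkK hone (hsm ▸ hdu')
      · exact ⟨u * gu, Finset.mul_mem_mul huT hgu, hyuP, fun hM => hyu hM.2⟩
    · exact ⟨1 * g1, Finset.mul_mem_mul h1T hg1, hy1P, fun hM => hy1 hM.2⟩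
end

section
/- Let G be a countably infinite discrete group and let G ↷ X be a free Borel action on a standard Borel space X. Then there exists a sequence {M_n}_{n∈ℕ} of pairwise disjoint syndetic Borel subsets of X. -/
open MeasureTheory Set

open Pointwise

lemma exists_max_indep
    {G : Type*} [Group G] [DecidableEq G] {X : Type*} [MeasurableSpace X] [MulAction G X]
    (hBorel : ∀ g : G, Measurable fun x : X => g • x)
    (hfree : ∀ (g : G) (x : X), g • x = x → g = 1)
    (sep : ℕ → Set X) (hsepm : ∀ i, MeasurableSet (sep i))
    (hsep : ∀ x y : X, x ≠ y → ∃ i, ¬ (x ∈ sep i ↔ y ∈ sep i))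
    (Y : Set X) (hY : MeasurableSet Y)
    (D : Finset G) (h1 : (1:G) ∉ D) (hsymm : ∀ d ∈ D, d⁻¹ ∈ D) :
    ∃ M : Set X, MeasurableSet M ∧ M ⊆ Y ∧
      (∀ x ∈ M, ∀ d ∈ D, d • x ∉ M) ∧
      (∀ x ∈ Y, ∃ g ∈ insert (1:G) D, g • x ∈ M) := by
  classical
  obtain ⟨e, he⟩ := exists_surjective_nat (Finset (ℕ × Bool))
  set B : ℕ → Set X := fun j => ⋂ p ∈ e j, (if p.2 then sep p.1 else (sep p.1)ᶜ) with hB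
  have hBm : ∀ j, MeasurableSet (B j) := by
    intro j
    refine MeasurableSet.biInter (Finset.countable_toSet _) fun p _ => ?_
    by_cases hb : p.2 <;> simp [hb, hsepm, (hsepm p.1).compl]
  have hex : ∀ x : X, ∃ j, x ∈ B j ∧ ∀ d ∈ D, d • x ∉ B j := by
    intro x
    have hne : ∀ d : G, ∃ i, d ∈ D → ¬ (x ∈ sep i ↔ d • x ∈ sep i) := by
      intro d
      by_cases hd : d ∈ D
      · have hxd : x ≠ d • x := by
          intro h
          exact h1 (by rwa [hfree d x h.symm] at hd)
        obtain ⟨i, hi⟩ := hsep x (d • x) hxd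
        exact ⟨i, fun _ => hi⟩
      · exact ⟨0, fun h => absurd h hd⟩
    choose I hI using hne
    obtain ⟨j, hj⟩ := he (D.image fun d => (I d, decide (x ∈ sep (I d))))
    refine ⟨j, ?_, ?_⟩
    · rw [hB]
      simp only [mem_iInter, hj, Finset.mem_coe, Finset.mem_image]
      rintro p ⟨d, hd, rfl⟩
      by_cases hx : x ∈ sep (I d) <;> simp [hx]
    · intro d hd hmem
      rw [hB] at hmem
      simp only [mem_iInter, hj, Finset.mem_coe, Finset.mem_image] at hmem
      have h2 := hmem (I d, decide (x ∈ sep (I d))) ⟨d, hd, rfl⟩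
      by_cases hx : x ∈ sep (I d) <;> simp [hx] at h2 <;>
        exact hI d hd (by tauto)
  set S : ℕ → Set X := fun j => Nat.rec ∅
    (fun m Sm => Sm ∪ {x | x ∈ Y ∧ Nat.find (hex x) = m ∧ ∀ d ∈ D, d • x ∉ Sm}) j with hS
  have hSsucc : ∀ j, S (j+1) = S j ∪ {x | x ∈ Y ∧ Nat.find (hex x) = j ∧ ∀ d ∈ D, d • x ∉ S j} :=
    fun j => rfl
  have hPm : ∀ j, MeasurableSet {x : X | x ∈ B j ∧ ∀ d ∈ D, d • x ∉ B j} := by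
    intro j
    have h3 : {x : X | x ∈ B j ∧ ∀ d ∈ D, d • x ∉ B j}
        = B j ∩ ⋂ d ∈ (D : Set G), (fun x => d • x) ⁻¹' (B j)ᶜ := by
      ext x; simp [mem_iInter]
    rw [h3]
    exact (hBm j).inter (MeasurableSet.biInter (Finset.countable_toSet _)
      fun d _ => (hBorel d) (hBm j).compl)
  have hfind : ∀ j, MeasurableSet {x : X | Nat.find (hex x) = j} := by
    intro j
    have h3 : {x : X | Nat.find (hex x) = j} =
        {x | x ∈ B j ∧ ∀ d ∈ D, d • x ∉ B j} ∩
          ⋂ i ∈ (Finset.range j : Finset ℕ), {x | x ∈ B i ∧ ∀ d ∈ D, d • x ∉ B i}ᶜ := by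
      ext x
      simp only [mem_setOf_eq, mem_inter_iff, mem_iInter, Finset.mem_range, mem_compl_iff,
        Nat.find_eq_iff]
    rw [h3]
    exact (hPm j).inter (MeasurableSet.biInter (Finset.countable_toSet _)
      fun i _ => (hPm i).compl)
  have hSm : ∀ j, MeasurableSet (S j) := by
    intro j
    induction j with
    | zero => exact MeasurableSet.empty
    | succ m ih =>
      rw [hSsucc]
      have h3 : {x | x ∈ Y ∧ Nat.find (hex x) = m ∧ ∀ d ∈ D, d • x ∉ S m}
          = Y ∩ ({x : X | Nat.find (hex x) = m} ∩
            ⋂ d ∈ (D : Set G), (fun x => d • x) ⁻¹' (S m)ᶜ) := by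
        ext x
        simp only [mem_setOf_eq, mem_inter_iff, mem_iInter, mem_preimage, mem_compl_iff,
          Finset.mem_coe]
      exact ih.union (h3 ▸ hY.inter ((hfind m).inter
        (MeasurableSet.biInter (Finset.countable_toSet _) fun d _ => (hBorel d) ih.compl)))
  have hSmono : ∀ j k, j ≤ k → S j ⊆ S k := by
    intro j k hjk
    induction k with
    | zero => simpa [Nat.le_zero.mp hjk] using Subset.rfl
    | succ m ih =>
      rcases Nat.lt_or_ge j (m+1) with h | h
      · exact (ih (Nat.lt_succ_iff.mp h)).trans (by rw [hSsucc]; exact subset_union_left)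
      · have : j = m + 1 := le_antisymm hjk h
        subst this; exact Subset.rfl
  have hSY : ∀ j, S j ⊆ Y := by
    intro j
    induction j with
    | zero => simp [hS]
    | succ m ih =>
      rw [hSsucc]
      refine union_subset ih ?_
      intro x hx
      exact hx.1
  refine ⟨⋃ j, S j, MeasurableSet.iUnion hSm, iUnion_subset hSY, ?_, ?_⟩
  · -- independence
    intro x hx d hd hdx
    -- minimal entry times
    have hentry : ∀ z : X, z ∈ ⋃ j, S j → z ∈ S (Nat.find (hex z) + 1) ∧
        (∀ d' ∈ D, d' • z ∉ S (Nat.find (hex z))) := by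
      intro z hz
      obtain ⟨j, hj⟩ := mem_iUnion.mp hz
      -- find the step where z was added
      induction j with
      | zero => simp [hS] at hj
      | succ m ih =>
        rw [hSsucc] at hj
        rcases hj with hj | hj
        · exact ih hj
        · obtain ⟨hzY, hfz, hcond⟩ := hj
          constructor
          · rw [hfz, hSsucc]
            right
            exact ⟨hzY, hfz, hcond⟩
          · rw [hfz]
            exact hcond
    obtain ⟨hxin, hxcond⟩ := hentry x hx
    obtain ⟨hyin, hycond⟩ := hentry _ hdx
    rcases lt_trichotomy (Nat.find (hex x)) (Nat.find (hex (d • x))) with h | h | h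
    · have hxS : x ∈ S (Nat.find (hex (d • x))) := hSmono _ _ h hxin
      have := hycond d⁻¹ (hsymm d hd)
      rw [inv_smul_smul] at this
      exact this hxS
    · have h1x := (Nat.find_spec (hex x)).1
      have h2x := (Nat.find_spec (hex x)).2 d hd
      have h1y := (Nat.find_spec (hex (d • x))).1
      rw [← h] at h1y
      exact h2x h1y
    · have hyS : d • x ∈ S (Nat.find (hex x)) := hSmono _ _ h hyin
      exact hxcond d hd hyS
  · -- maximality / cover
    intro x hxY
    by_cases hxM : x ∈ ⋃ j, S j
    · exact ⟨1, Finset.mem_insert_self _ _, by rwa [one_smul]⟩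
    · have hnot : x ∉ S (Nat.find (hex x) + 1) := fun h => hxM (mem_iUnion.mpr ⟨Nat.find (hex x) + 1, h⟩)
      rw [hSsucc] at hnot
      have h4 : ¬ (∀ d ∈ D, d • x ∉ S (Nat.find (hex x))) :=
        fun hc => hnot (Or.inr ⟨hxY, rfl, hc⟩)
      push_neg at h4
      obtain ⟨d, hd, hdS⟩ := h4
      exact ⟨d, Finset.mem_insert_of_mem hd,
        mem_iUnion.mpr ⟨Nat.find (hex x), hdS⟩⟩

lemma exists_K {G : Type*} [Group G] [Infinite G] [DecidableEq G] :
    ∃ K : ℕ → Finset G, (∀ n, (K n).card = 2 ^ n) ∧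
      ∀ i n, i ≤ n → ∃ T : Finset G, T.card ≤ 2 ^ (n - i) ∧
        ∀ k ∈ K n, ∃ u ∈ K i, ∃ r ∈ T, k = u * r := by
  classical
  -- pick a fresh element not in a given finset
  have fresh : ∀ s : Finset G, ∃ t : G, t ∉ s⁻¹ * s := fun s =>
    Infinite.exists_notMem_finset (s⁻¹ * s)
  set K : ℕ → Finset G := fun n => Nat.rec {1}
    (fun _ Km => Km ∪ Km * {(fresh Km).choose}) n with hK
  have hKsucc : ∀ n, K (n+1) = K n ∪ K n * {(fresh (K n)).choose} := fun n => rfl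
  have hdisj : ∀ n, Disjoint (K n) (K n * {(fresh (K n)).choose}) := by
    intro n
    rw [Finset.disjoint_left]
    intro a ha ha'
    rw [Finset.mem_mul] at ha'
    obtain ⟨b, hb, c, hc, rfl⟩ := ha'
    rw [Finset.mem_singleton] at hc
    subst hc
    have h5 : (fresh (K n)).choose = b⁻¹ * (b * (fresh (K n)).choose) :=
      (inv_mul_cancel_left b _).symm
    exact (fresh (K n)).choose_spec
      (h5 ▸ Finset.mul_mem_mul (Finset.inv_mem_inv hb) ha)
  have hcard : ∀ n, (K n).card = 2 ^ n := by
    intro n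
    induction n with
    | zero => simp [hK]
    | succ m ih =>
      rw [hKsucc, Finset.card_union_of_disjoint (hdisj m), Finset.card_mul_singleton, ih]
      ring
  refine ⟨K, hcard, ?_⟩
  intro i n hin
  induction n with
  | zero =>
    refine ⟨{1}, by simp, ?_⟩
    interval_cases i
    intro k hk
    exact ⟨k, hk, 1, Finset.mem_singleton_self 1, (mul_one k).symm⟩
  | succ m ih =>
    rcases Nat.lt_or_ge i (m+1) with h | h
    · obtain ⟨T, hTcard, hT⟩ := ih (Nat.lt_succ_iff.mp h)
      refine ⟨T ∪ T * {(fresh (K m)).choose}, ?_, ?_⟩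
      · calc (T ∪ T * {(fresh (K m)).choose}).card
            ≤ T.card + (T * {(fresh (K m)).choose}).card := Finset.card_union_le _ _
          _ ≤ 2^(m-i) + 2^(m-i) := by
              rw [Finset.card_mul_singleton]
              omega
          _ ≤ 2^(m+1-i) := by
              have : m + 1 - i = (m - i) + 1 := by omega
              rw [this]; ring_nf; omega
      · intro k hk
        rw [hKsucc, Finset.mem_union] at hk
        rcases hk with hk | hk
        · obtain ⟨u, hu, r, hr, rfl⟩ := hT k hk
          exact ⟨u, hu, r, Finset.mem_union_left _ hr, rfl⟩
        · rw [Finset.mem_mul] at hk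
          obtain ⟨k₀, hk₀, c, hc, rfl⟩ := hk
          rw [Finset.mem_singleton] at hc
          subst hc
          obtain ⟨u, hu, r, hr, rfl⟩ := hT k₀ hk₀
          refine ⟨u, hu, r * (fresh (K m)).choose, ?_, mul_assoc _ _ _⟩
          exact Finset.mem_union_right _
            (Finset.mul_mem_mul hr (Finset.mem_singleton_self _))
    · have : i = m + 1 := le_antisymm hin h
      subst this
      refine ⟨{1}, by simp, fun k hk => ⟨k, hk, 1, Finset.mem_singleton_self 1, (mul_one k).symm⟩⟩

lemma sum_pow_bound : ∀ n : ℕ, (∑ i ∈ Finset.range n, 2 ^ (n - i)) + 2 ≤ 2 ^ (n + 1) := by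
  intro n
  induction n with
  | zero => simp
  | succ m ih =>
    have h1 : (∑ i ∈ Finset.range (m+1), 2 ^ (m + 1 - i))
        = (∑ i ∈ Finset.range m, 2 ^ (m + 1 - i)) + 2 := by
      rw [Finset.sum_range_succ]; norm_num
    have h2 : (∑ i ∈ Finset.range m, 2 ^ (m + 1 - i))
        = (∑ i ∈ Finset.range m, 2 ^ (m - i)) * 2 := by
      rw [Finset.sum_mul]
      refine Finset.sum_congr rfl fun i hi => ?_
      have : m + 1 - i = (m - i) + 1 := by
        have := Finset.mem_range.mp hi; omega
      rw [this, pow_succ]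
    have h3 : (2:ℕ) ^ (m + 1 + 1) = 2 ^ (m+1) * 2 := by rw [pow_succ]
    omega

/-- Proposition 3.4.(2): for a free Borel action of a countably infinite group there is a
sequence of pairwise disjoint syndetic Borel subsets. -/
theorem exists_disjoint_syndetic_sequence
    {G : Type*} [Group G] [Countable G] [Infinite G]
    {X : Type*} [MeasurableSpace X] [StandardBorelSpace X] [MulAction G X]
    (hBorel : ∀ g : G, Measurable fun x : X => g • x)
    (hfree : ∀ (g : G) (x : X), g • x = x → g = 1) :
    ∃ M : ℕ → Set X,
      (∀ n, MeasurableSet (M n)) ∧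
      (∀ n, Syndetic (G := G) (M n)) ∧
      (∀ m n, m ≠ n → Disjoint (M m) (M n)) := by
  classical
  -- separating family
  obtain ⟨sep, hsepm, hsep⟩ : ∃ f : ℕ → Set X, (∀ i, MeasurableSet (f i)) ∧
      ∀ x y : X, x ≠ y → ∃ i, ¬ (x ∈ f i ↔ y ∈ f i) := by
    obtain ⟨f, hm, hs⟩ := exists_seq_separating X MeasurableSet.empty univ
    refine ⟨f, hm, fun x y hxy => ?_⟩
    by_contra h
    push_neg at h
    exact hxy (hs x trivial y trivial fun n => h n)
  -- the tiles K n
  obtain ⟨K, hKcard, hKcoset⟩ := exists_K (G := G)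
  -- the separation sets D n
  set DD : ℕ → Finset G := fun i => ((K (i+1)) * (K (i+1))⁻¹).erase 1 with hDD
  have hD1 : ∀ i, (1:G) ∉ DD i := fun i => Finset.notMem_erase _ _
  have hDsymm : ∀ i, ∀ d ∈ DD i, d⁻¹ ∈ DD i := by
    intro i d hd
    rw [hDD, Finset.mem_erase, Finset.mem_mul] at hd ⊢
    obtain ⟨hd1, a, ha, b, hb, rfl⟩ := hd
    rw [Finset.mem_inv] at hb
    obtain ⟨b₀, hb₀, rfl⟩ := hb
    refine ⟨?_, b₀, hb₀, a⁻¹, Finset.inv_mem_inv ha, by group⟩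
    intro h
    exact hd1 (inv_eq_one.mp h)
  -- the one-step construction
  set mk : Set X → ℕ → Set X := fun U i =>
    if h : MeasurableSet U then
      (exists_max_indep hBorel hfree sep hsepm hsep Uᶜ h.compl (DD i) (hD1 i)
        (hDsymm i)).choose
    else ∅ with hmkdef
  have hmk : ∀ (U : Set X) (i : ℕ), MeasurableSet U →
      MeasurableSet (mk U i) ∧ mk U i ⊆ Uᶜ ∧
      (∀ x ∈ mk U i, ∀ d ∈ DD i, d • x ∉ mk U i) ∧
      (∀ x ∈ Uᶜ, ∃ g ∈ insert (1:G) (DD i), g • x ∈ mk U i) := by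
    intro U i h
    have heq : mk U i = (exists_max_indep hBorel hfree sep hsepm hsep Uᶜ h.compl (DD i)
        (hD1 i) (hDsymm i)).choose := dif_pos h
    rw [heq]
    exact (exists_max_indep hBorel hfree sep hsepm hsep Uᶜ h.compl (DD i)
      (hD1 i) (hDsymm i)).choose_spec
  -- the recursion
  set U : ℕ → Set X := fun n => Nat.rec ∅ (fun m Um => Um ∪ mk Um m) n with hU
  set M : ℕ → Set X := fun n => mk (U n) n with hM
  have hUsucc : ∀ n, U (n+1) = U n ∪ M n := fun n => rfl
  have hUmeas : ∀ n, MeasurableSet (U n) := by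
    intro n
    induction n with
    | zero => exact MeasurableSet.empty
    | succ m ih => exact ih.union (hmk _ m ih).1
  have hMspec : ∀ n, MeasurableSet (M n) ∧ M n ⊆ (U n)ᶜ ∧
      (∀ x ∈ M n, ∀ d ∈ DD n, d • x ∉ M n) ∧
      (∀ x ∈ (U n)ᶜ, ∃ g ∈ insert (1:G) (DD n), g • x ∈ M n) :=
    fun n => hmk (U n) n (hUmeas n)
  have hUiff : ∀ n (x : X), x ∈ U n ↔ ∃ i, i < n ∧ x ∈ M i := by
    intro n
    induction n with
    | zero => intro x; simp [hU]
    | succ m ih =>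
      intro x
      rw [hUsucc, mem_union, ih x]
      constructor
      · rintro (⟨i, hi, hxi⟩ | hx)
        · exact ⟨i, by omega, hxi⟩
        · exact ⟨m, by omega, hx⟩
      · rintro ⟨i, hi, hxi⟩
        rcases Nat.lt_or_ge i m with h | h
        · exact Or.inl ⟨i, h, hxi⟩
        · have : i = m := by omega
          subst this
          exact Or.inr hxi
  -- the counting argument
  have hcount : ∀ n (x : X), ∃ k ∈ K (n+1), k • x ∉ U n := by
    intro n x
    by_contra hc
    push_neg at hc
    have hsub : K (n+1) ⊆ (Finset.range n).biUnion
        (fun i => (K (n+1)).filter (fun k => k • x ∈ M i)) := by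
      intro k hk
      obtain ⟨i, hi, hMi⟩ := (hUiff n (k • x)).mp (hc k hk)
      exact Finset.mem_biUnion.mpr ⟨i, Finset.mem_range.mpr hi,
        Finset.mem_filter.mpr ⟨hk, hMi⟩⟩
    have hfilter : ∀ i, i < n → ((K (n+1)).filter (fun k => k • x ∈ M i)).card ≤ 2^(n-i) := by
      intro i hi
      obtain ⟨T, hTc, hT⟩ := hKcoset (i+1) (n+1) (by omega)
      have hTc' : T.card ≤ 2^(n-i) := by
        have he : n + 1 - (i+1) = n - i := by omega
        rwa [he] at hTc
      choose uu hu rr hr heq using hT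
      refine le_trans (Finset.card_le_card_of_injOn
        (fun k => if h : k ∈ K (n+1) then rr k h else 1) ?_ ?_) hTc'
      · intro k hk
        have hkK := (Finset.mem_filter.mp hk).1
        simp only [dif_pos hkK]
        exact hr k hkK
      · intro k hk k' hk' hreq
        have hkK := (Finset.mem_filter.mp hk).1
        have hk'K := (Finset.mem_filter.mp hk').1
        have hkM := (Finset.mem_filter.mp hk).2
        have hk'M := (Finset.mem_filter.mp hk').2
        simp only [dif_pos hkK, dif_pos hk'K] at hreq
        by_contra hne
        -- the difference element
        have hdval : k' * k⁻¹ = uu k' hk'K * (uu k hkK)⁻¹ := by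
          have e1 := heq k hkK
          have e2 := heq k' hk'K
          have hstep : uu k' hk'K * rr k' hk'K * (uu k hkK * rr k hkK)⁻¹
              = uu k' hk'K * (uu k hkK)⁻¹ := by
            rw [hreq]; group
          rw [← e1, ← e2] at hstep
          exact hstep
        have hdm : k' * k⁻¹ ∈ DD i := by
          rw [hDD, Finset.mem_erase]
          constructor
          · intro h
            exact hne (mul_inv_eq_one.mp h).symm
          · rw [hdval]
            exact Finset.mul_mem_mul (hu k' hk'K) (Finset.inv_mem_inv (hu k hkK))
        have := (hMspec i).2.2.1 (k • x) hkM (k' * k⁻¹) hdm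
        rw [smul_smul, inv_mul_cancel_right] at this
        exact this hk'M
    have hb : (K (n+1)).card ≤ ∑ i ∈ Finset.range n,
        ((K (n+1)).filter (fun k => k • x ∈ M i)).card :=
      le_trans (Finset.card_le_card hsub) Finset.card_biUnion_le
    have hs2 : (∑ i ∈ Finset.range n, ((K (n+1)).filter (fun k => k • x ∈ M i)).card)
        ≤ ∑ i ∈ Finset.range n, 2^(n-i) :=
      Finset.sum_le_sum fun i hi => hfilter i (Finset.mem_range.mp hi)
    have hs3 := sum_pow_bound n
    rw [hKcard (n+1)] at hb
    omega
  refine ⟨M, fun n => (hMspec n).1, ?_, ?_⟩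
  · -- syndeticity
    intro n
    show ∃ F : Finset G, ∀ x : X, ∃ g ∈ F, g⁻¹ • x ∈ M n
    refine ⟨((insert (1:G) (DD n)) * (K (n+1)))⁻¹, fun x => ?_⟩
    obtain ⟨k, hk, hkU⟩ := hcount n x
    obtain ⟨g, hg, hgM⟩ := (hMspec n).2.2.2 (k • x) hkU
    refine ⟨(g * k)⁻¹, Finset.inv_mem_inv (Finset.mul_mem_mul hg hk), ?_⟩
    rw [inv_inv, mul_smul]
    exact hgM
  · -- disjointness
    have key : ∀ m n, m < n → Disjoint (M m) (M n) := by
      intro m n hmn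
      rw [Set.disjoint_left]
      intro x hxm hxn
      have hxU : x ∈ U n := (hUiff n x).mpr ⟨m, hmn, hxm⟩
      exact (hMspec n).2.1 hxn hxU
    intro m n hmn
    rcases Nat.lt_or_ge m n with h | h
    · exact key m n h
    · exact (key n m (by omega)).symm
end

section
/- Let G be a countably infinite discrete group and let G ↷ X be a free Borel action on a standard Borel space X. Then for any Borel probability measure μ on X and any ε > 0 there exists a syndetic Borel subset M ⊆ X with μ(M) < ε. -/
open MeasureTheory Set

namespace SmallSyndetic

variable {G X : Type*} [Group G] [MulAction G X]

/-- Union of greedy independent-set classes of color `< n` inside `A`. -/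
def U (S : Finset G) (c : X → ℕ) (A : Set X) : ℕ → Set X
  | 0 => ∅
  | n+1 => U S c A n ∪ {x | x ∈ A ∧ c x = n ∧ ∀ s ∈ S, s • x ∉ U S c A n}

/-- Greedy maximal `S`-independent subset of `A`. -/
def MIS (S : Finset G) (c : X → ℕ) (A : Set X) : Set X := ⋃ n, U S c A n

variable {S : Finset G} {c : X → ℕ} {A : Set X}

lemma U_mono {m n : ℕ} (h : m ≤ n) : U S c A m ⊆ U S c A n := by
  induction n with
  | zero => simp_all
  | succ n ih =>
    rcases Nat.lt_or_ge m (n+1) with h' | h'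
    · exact (ih (Nat.lt_succ_iff.mp h')).trans (subset_union_left)
    · have : m = n + 1 := le_antisymm h h'
      subst this; exact subset_rfl

lemma U_subset : ∀ n, U S c A n ⊆ A
  | 0 => by simp [U]
  | n+1 => by
    intro x hx
    rcases hx with hx | hx
    · exact U_subset n hx
    · exact hx.1

lemma MIS_subset : MIS S c A ⊆ A := iUnion_subset fun n => U_subset n

lemma indepU (hsym : ∀ s ∈ S, s⁻¹ ∈ S) (hc : ∀ x, ∀ s ∈ S, c (s • x) ≠ c x) :
    ∀ n, ∀ x ∈ U S c A n, ∀ s ∈ S, s • x ∉ U S c A n := by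
  intro n
  induction n with
  | zero => intro x hx; simp [U] at hx
  | succ n ih =>
    intro x hx s hs hsx
    rcases hx with hx | hx
    · rcases hsx with hsx | hsx
      · exact ih x hx s hs hsx
      · exact hsx.2.2 s⁻¹ (hsym s hs) (by simpa using hx)
    · rcases hsx with hsx | hsx
      · exact hx.2.2 s hs hsx
      · exact hc x s hs (hsx.2.1.trans hx.2.1.symm)

lemma MIS_indep (hsym : ∀ s ∈ S, s⁻¹ ∈ S) (hc : ∀ x, ∀ s ∈ S, c (s • x) ≠ c x)
    {x : X} (hx : x ∈ MIS S c A) {s : G} (hs : s ∈ S) : s • x ∉ MIS S c A := by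
  intro hsx
  rcases mem_iUnion.mp hx with ⟨m, hm⟩
  rcases mem_iUnion.mp hsx with ⟨m', hm'⟩
  exact indepU hsym hc (max m m') x (U_mono (le_max_left m m') hm) s hs
    (U_mono (le_max_right m m') hm')

lemma MIS_max {x : X} (hx : x ∈ A) : x ∈ MIS S c A ∨ ∃ s ∈ S, s • x ∈ MIS S c A := by
  by_cases h : x ∈ MIS S c A
  · exact Or.inl h
  · right
    have hx' : x ∉ U S c A (c x + 1) := fun hh => h (mem_iUnion.mpr ⟨_, hh⟩)
    have : ¬ (x ∈ A ∧ c x = c x ∧ ∀ s ∈ S, s • x ∉ U S c A (c x)) := by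
      intro hh; exact hx' (Or.inr hh)
    push_neg at this
    rcases this hx rfl with ⟨s, hs, hsx⟩
    exact ⟨s, hs, mem_iUnion.mpr ⟨_, hsx⟩⟩

lemma U_measurable [MeasurableSpace X] (hBorel : ∀ g : G, Measurable fun x : X => g • x)
    (hc : Measurable c) (hA : MeasurableSet A) : ∀ n, MeasurableSet (U S c A n)
  | 0 => by simp [U]
  | n+1 => by
    have ihn := U_measurable hBorel hc hA n
    have h2 : MeasurableSet {x : X | x ∈ A ∧ c x = n ∧ ∀ s ∈ S, s • x ∉ U S c A n} := by
      have he : {x : X | x ∈ A ∧ c x = n ∧ ∀ s ∈ S, s • x ∉ U S c A n}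
          = A ∩ (c ⁻¹' {n}) ∩ ⋂ s ∈ S, (fun x => s • x) ⁻¹' (U S c A n)ᶜ := by
        ext x; simp only [Set.mem_setOf_eq, Set.mem_inter_iff, Set.mem_preimage,
          Set.mem_singleton_iff, Set.mem_iInter, Set.mem_compl_iff]; tauto
      rw [he]
      exact (hA.inter (hc (measurableSet_singleton n))).inter
        (MeasurableSet.biInter S.countable_toSet fun s _ => (hBorel s) ihn.compl)
    exact ihn.union h2


def R (S : Finset G) (c : X → ℕ) : ℕ → Set X
  | 0 => Set.univ
  | i+1 => R S c i \ MIS S c (R S c i)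

/-- The `i`-th greedy syndetic class. -/
def cls (S : Finset G) (c : X → ℕ) (i : ℕ) : Set X := MIS S c (R S c i)

lemma R_succ_subset (i : ℕ) : R S c (i+1) ⊆ R S c i := diff_subset

lemma R_anti {i j : ℕ} (h : i ≤ j) : R S c j ⊆ R S c i := by
  induction j with
  | zero => simp_all
  | succ j ih =>
    rcases Nat.lt_or_ge i (j+1) with h' | h'
    · exact (R_succ_subset j).trans (ih (Nat.lt_succ_iff.mp h'))
    · have : i = j + 1 := le_antisymm h h'
      subst this; exact subset_rfl

lemma cls_subset_R (i : ℕ) : cls S c i ⊆ R S c i := MIS_subset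

lemma cls_disjoint {i j : ℕ} (h : i < j) : Disjoint (cls S c i) (cls S c j) := by
  have hsub : cls S c j ⊆ R S c (i+1) := (cls_subset_R j).trans (R_anti h)
  exact Set.disjoint_left.mpr fun x hxi hxj => (hsub hxj).2 hxi

lemma exists_cls_of_not_R {x : X} : ∀ i, x ∉ R S c i → ∃ j < i, x ∈ cls S c j
  | 0 => by simp [R]
  | i+1 => fun hx => by
    by_cases h : x ∈ R S c i
    · refine ⟨i, Nat.lt_succ_self i, ?_⟩
      by_contra hc'
      exact hx ⟨h, hc'⟩
    · rcases exists_cls_of_not_R i h with ⟨j, hj, hcj⟩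
      exact ⟨j, hj.trans (Nat.lt_succ_self i), hcj⟩

lemma R_measurable [MeasurableSpace X] (hBorel : ∀ g : G, Measurable fun x : X => g • x)
    (hc : Measurable c) : ∀ i, MeasurableSet (R S c i)
  | 0 => MeasurableSet.univ
  | i+1 => (R_measurable hBorel hc i).diff
      (MeasurableSet.iUnion fun n => U_measurable hBorel hc (R_measurable hBorel hc i) n)

lemma cls_measurable [MeasurableSpace X] (hBorel : ∀ g : G, Measurable fun x : X => g • x)
    (hc : Measurable c) (i : ℕ) : MeasurableSet (cls S c i) :=
  MeasurableSet.iUnion fun n => U_measurable hBorel hc (R_measurable hBorel hc i) n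


lemma exists_coloring [MeasurableSpace X] [StandardBorelSpace X]
    (hBorel : ∀ g : G, Measurable fun x : X => g • x)
    (hfree : ∀ (g : G) (x : X), g • x = x → g = 1)
    (S : Finset G) (h1 : (1:G) ∉ S) :
    ∃ c : X → ℕ, Measurable c ∧ ∀ x : X, ∀ s ∈ S, c (s • x) ≠ c x := by
  classical
  obtain ⟨f, hf⟩ := exists_measurableEmbedding_real X
  obtain ⟨d, hd⟩ := exists_surjective_nat (ℚ × ℚ)
  set I : ℕ → Set ℝ := fun n => Set.Ioo ((d n).1 : ℝ) ((d n).2 : ℝ) with hI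
  set P : ℕ → X → Prop := fun n x => f x ∈ I n ∧ ∀ s ∈ S, f (s • x) ∉ I n with hP
  have hex : ∀ x : X, ∃ n, P n x := by
    intro x
    set V : Finset ℝ := S.image (fun s => f (s • x)) with hV
    have hVne : ∀ v ∈ V, v ≠ f x := by
      intro v hv he
      rcases Finset.mem_image.mp hv with ⟨s, hs, rfl⟩
      exact h1 (hfree s x (hf.injective he) ▸ hs)
    set Vlt := V.filter (fun v => v < f x) with hVlt
    set Vgt := V.filter (fun v => f x < v) with hVgt
    set lo : ℝ := if h : Vlt.Nonempty then Vlt.max' h else f x - 1 with hlo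
    set hi : ℝ := if h : Vgt.Nonempty then Vgt.min' h else f x + 1 with hhi
    have hlo_lt : lo < f x := by
      rw [hlo]
      split_ifs with h
      · exact (Finset.mem_filter.mp (Vlt.max'_mem h)).2
      · linarith
    have hhi_gt : f x < hi := by
      rw [hhi]
      split_ifs with h
      · exact (Finset.mem_filter.mp (Vgt.min'_mem h)).2
      · linarith
    obtain ⟨a, ha1, ha2⟩ := exists_rat_btwn hlo_lt
    obtain ⟨b, hb1, hb2⟩ := exists_rat_btwn hhi_gt
    obtain ⟨n, hn⟩ := hd (a, b)
    refine ⟨n, ⟨by simp [hI, hn]; exact ⟨ha2, hb1⟩, ?_⟩⟩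
    intro s hs hmem
    have hv : f (s • x) ∈ V := Finset.mem_image.mpr ⟨s, hs, rfl⟩
    have hne := hVne _ hv
    rcases lt_or_gt_of_ne hne with hlt | hgt
    · have : f (s • x) ≤ lo := by
        have hmem' : f (s • x) ∈ Vlt := Finset.mem_filter.mpr ⟨hv, hlt⟩
        rw [hlo]
        rw [dif_pos ⟨_, hmem'⟩]
        exact Vlt.le_max' _ hmem'
      have := hmem.1
      simp [hI, hn] at this
      linarith
    · have : hi ≤ f (s • x) := by
        have hmem' : f (s • x) ∈ Vgt := Finset.mem_filter.mpr ⟨hv, hgt⟩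
        rw [hhi, dif_pos ⟨_, hmem'⟩]
        exact Vgt.min'_le _ hmem'
      have := hmem.2
      simp [hI, hn] at this
      linarith
  have hPm : ∀ n, MeasurableSet {x : X | P n x} := by
    intro n
    have : {x : X | P n x} = f ⁻¹' (I n) ∩ ⋂ s ∈ S, (fun x => s • x) ⁻¹' (f ⁻¹' (I n))ᶜ := by
      ext x
      simp [hP, Set.mem_iInter]
    rw [this]
    exact (hf.measurable measurableSet_Ioo).inter
      (MeasurableSet.biInter S.countable_toSet fun s _ =>
        (hBorel s) (hf.measurable measurableSet_Ioo).compl)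
  refine ⟨fun x => Nat.find (hex x), measurable_find _ hPm, ?_⟩
  intro x s hs he
  have h1' := Nat.find_spec (hex (s • x))
  have h2' := Nat.find_spec (hex x)
  simp only at he
  rw [he] at h1'
  exact h2'.2 s hs h1'.1


end SmallSyndetic

open SmallSyndetic Pointwise

/-- Proposition 3.4 (consequence): for any Borel probability measure `μ` and any `ε > 0`
there is a syndetic Borel set of measure less than `ε`. -/
theorem exists_small_syndetic
    {G : Type*} [Group G] [Countable G] [Infinite G]
    {X : Type*} [MeasurableSpace X] [StandardBorelSpace X] [MulAction G X]
    (hBorel : ∀ g : G, Measurable fun x : X => g • x)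
    (hfree : ∀ (g : G) (x : X), g • x = x → g = 1)
    (μ : Measure X) [IsProbabilityMeasure μ] (ε : ℝ) (hε : 0 < ε) :
    ∃ M : Set X, MeasurableSet M ∧ Syndetic (G := G) M ∧ μ M < ENNReal.ofReal ε := by
  classical
  obtain ⟨k, hk⟩ := exists_nat_gt (1/ε)
  have hkε : 1 < (k + 1 : ℝ) * ε := by
    have h0 : 1/ε < (k:ℝ) + 1 := hk.trans (by linarith)
    calc (1:ℝ) = (1/ε) * ε := by field_simp
    _ < ((k:ℝ)+1) * ε := by
        exact mul_lt_mul_of_pos_right h0 hε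
  let t : ℕ ↪ G := Infinite.natEmbedding G
  let T : Finset G := (Finset.range (k+1)).image t
  let S : Finset G := (T * T⁻¹).erase 1
  have h1S : (1:G) ∉ S := Finset.notMem_erase _ _
  have htT : ∀ j ∈ Finset.range (k+1), t j ∈ T := fun j hj => Finset.mem_image_of_mem t hj
  have hsym : ∀ s ∈ S, s⁻¹ ∈ S := by
    intro s hs
    rcases Finset.mem_erase.mp hs with ⟨hne, hmem⟩
    rcases Finset.mem_mul.mp hmem with ⟨a, ha, b, hb, rfl⟩
    refine Finset.mem_erase.mpr ⟨fun h => hne (by rwa [inv_eq_one] at h), ?_⟩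
    rw [mul_inv_rev]
    exact Finset.mul_mem_mul (by simpa using Finset.inv_mem_inv hb) (Finset.inv_mem_inv ha)
  obtain ⟨c, hcm, hcol⟩ := exists_coloring (X := X) hBorel hfree S h1S
  have hindep : ∀ i : ℕ, ∀ x ∈ cls S c i, ∀ s ∈ S, s • x ∉ cls (X := X) S c i :=
    fun i x hx s hs => MIS_indep hsym hcol hx hs
  -- each class with index ≤ k is syndetic
  have hsynd : ∀ i ≤ k, Syndetic (G := G) (cls (X := X) S c i) := by
    intro i hi
    refine ⟨((insert (1:G) S) * T)⁻¹, ?_⟩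
    intro x
    have hstep : ∃ j ∈ Finset.range (k+1), t j • x ∈ R S c i := by
      by_contra hcon
      push_neg at hcon
      have hφ : ∀ j, j ∈ Finset.range (k+1) → ∃ m, m < i ∧ t j • x ∈ cls S c m := by
        intro j hj
        rcases exists_cls_of_not_R (c := c) i (hcon j hj) with ⟨m, hm, hmem⟩
        exact ⟨m, hm, hmem⟩
      choose! φ hφ1 hφ2 using hφ
      have hcard : (Finset.range i).card < (Finset.range (k+1)).card := by
        simp only [Finset.card_range]
        omega
      obtain ⟨j, hj, j', hj', hne, heq⟩ :=
        Finset.exists_ne_map_eq_of_card_lt_of_maps_to hcard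
          (fun j hj => Finset.mem_range.mpr (hφ1 j hj))
      have hp : t j • x ∈ cls (X := X) S c (φ j) := hφ2 j hj
      have hq : t j' • x ∈ cls (X := X) S c (φ j) := by rw [heq]; exact hφ2 j' hj'
      have hs0 : t j' * (t j)⁻¹ ∈ S := by
        refine Finset.mem_erase.mpr ⟨?_, Finset.mul_mem_mul (htT j' hj') (Finset.inv_mem_inv (htT j hj))⟩
        intro h
        exact hne (t.injective (mul_inv_eq_one.mp h)).symm
      have : (t j' * (t j)⁻¹) • (t j • x) = t j' • x := by
        rw [smul_smul, inv_mul_cancel_right]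
      exact hindep (φ j) _ hp _ hs0 (this ▸ hq)
    obtain ⟨j, hj, hR⟩ := hstep
    rcases MIS_max (S := S) (c := c) (A := R S c i) hR with hy | ⟨s, hs, hsy⟩
    · refine ⟨((1 : G) * t j)⁻¹, Finset.inv_mem_inv (Finset.mul_mem_mul (Finset.mem_insert_self 1 _) (htT j hj)), ?_⟩
      simpa [cls] using hy
    · refine ⟨(s * t j)⁻¹, Finset.inv_mem_inv (Finset.mul_mem_mul (Finset.mem_insert_of_mem hs) (htT j hj)), ?_⟩
      rw [inv_inv, mul_smul]
      exact hsy
  -- pigeonhole on measures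
  have hmeas : ∀ i : ℕ, MeasurableSet (cls (X := X) S c i) := cls_measurable hBorel hcm
  have hsum : ∑ i ∈ Finset.range (k+1), μ (cls (X := X) S c i) ≤ 1 := by
    rw [← measure_biUnion_finset ?_ (fun i _ => hmeas i)]
    · exact (measure_mono (subset_univ _)).trans (by simp)
    · intro a _ b _ hab
      rcases Nat.lt_or_ge a b with h | h
      · exact cls_disjoint h
      · exact (cls_disjoint (lt_of_le_of_ne h (Ne.symm hab))).symm
  have hex : ∃ i ∈ Finset.range (k+1), μ (cls (X := X) S c i) < ENNReal.ofReal ε := by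
    by_contra hcon
    push_neg at hcon
    have hge := Finset.card_nsmul_le_sum (Finset.range (k+1))
      (fun i => μ (cls (X := X) S c i)) (ENNReal.ofReal ε) hcon
    rw [Finset.card_range, nsmul_eq_mul] at hge
    have hle1 : ((k+1 : ℕ) : ENNReal) * ENNReal.ofReal ε ≤ 1 := hge.trans hsum
    have hgt1 : (1 : ENNReal) < ((k+1 : ℕ) : ENNReal) * ENNReal.ofReal ε := by
      have h2 : ENNReal.ofReal 1 < ENNReal.ofReal (((k:ℝ)+1) * ε) :=
        (ENNReal.ofReal_lt_ofReal_iff (by positivity)).mpr hkε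
      rw [ENNReal.ofReal_one, ENNReal.ofReal_mul (by positivity)] at h2
      have hcast : ENNReal.ofReal ((k:ℝ)+1) = ((k+1 : ℕ) : ENNReal) := by
        push_cast
        rw [ENNReal.ofReal_add (by positivity) zero_le_one, ENNReal.ofReal_natCast,
          ENNReal.ofReal_one]
      rwa [hcast] at h2
    exact absurd hle1 (not_le.mpr hgt1)
  obtain ⟨i, hik, hismall⟩ := hex
  exact ⟨cls S c i, hmeas i, hsynd i (Nat.lt_succ_iff.mp (Finset.mem_range.mp hik)), hismall⟩
end

section
/- Let G be a countable group and let G ↷ X be a free Borel action of G on a standard Borel space X. Let S ⊆ G be finite and let Y ⊆ X be Borel. Then there exists a Borel set D ⊆ Y such that S·y ∩ S·y' = ∅ for all distinct y, y' ∈ D, and which is maximal with this property: for every y ∈ Y \ D there exists y' ∈ D with S·y ∩ S·y' ≠ ∅. -/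
open MeasureTheory Set

/-- Lemma 3.2: for a free Borel action `G ↷ X`, a finite `S ⊆ G` and Borel `Y ⊆ X`, there
is a Borel set `D ⊆ Y` whose points have pairwise disjoint `S`-translates, and which is
maximal with this property. -/
theorem exists_maximal_S_disjoint_set
    {G : Type*} [Group G] [Countable G]
    {X : Type*} [MeasurableSpace X] [StandardBorelSpace X] [MulAction G X]
    (hBorel : ∀ g : G, Measurable fun x : X => g • x)
    (hfree : ∀ (g : G) (x : X), g • x = x → g = 1)
    (S : Finset G) (Y : Set X) (hY : MeasurableSet Y) :
    ∃ D : Set X, MeasurableSet D ∧ D ⊆ Y ∧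
      (∀ y ∈ D, ∀ y' ∈ D, y ≠ y' → ∀ s ∈ S, ∀ s' ∈ S, s • y ≠ s' • y') ∧
      (∀ y ∈ Y, y ∉ D → ∃ y' ∈ D, ∃ s ∈ S, ∃ s' ∈ S, s • y = s' • y') := by
  classical
  -- a countable separating family of measurable sets
  obtain ⟨F, hFm, hFsep⟩ := exists_seq_separating X MeasurableSet.empty univ
  set f : ℕ × Bool → Set X := fun p => if p.2 then F p.1 else (F p.1)ᶜ with hf
  have hfm : ∀ p, MeasurableSet (f p) := by
    rintro ⟨n, b⟩
    cases b <;> simp [hf, hFm n, (hFm n).compl]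
  have hfsep : ∀ x y : X, x ≠ y → ∃ p, x ∈ f p ∧ y ∉ f p := by
    intro x y hxy
    by_contra h
    push_neg at h
    apply hxy
    apply hFsep x trivial y trivial
    intro n
    constructor
    · intro hx
      exact h (n, true) hx
    · intro hy
      by_contra hx
      exact (h (n, false) hx) hy
  -- the finite symmetric "difference" set T
  set T : Finset G := Finset.image (fun p : G × G => p.2⁻¹ * p.1) (S ×ˢ S) with hT
  have hTsymm : ∀ t ∈ T, t⁻¹ ∈ T := by
    intro t ht
    simp only [hT, Finset.mem_image, Finset.mem_product] at ht ⊢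
    obtain ⟨⟨a, b⟩, ⟨ha, hb⟩, rfl⟩ := ht
    exact ⟨⟨b, a⟩, ⟨hb, ha⟩, by group⟩
  -- index type
  let ι := (↑(T.erase 1) : Finset G) → ℕ × Bool
  have : Countable ι := inferInstance
  obtain ⟨g, hg⟩ := exists_surjective_nat ι
  -- the basic independent sets
  let B : ι → Set X := fun e =>
    ⋂ t : (↑(T.erase 1) : Finset G), (f (e t) ∩ (fun x => (t : G) • x) ⁻¹' (f (e t))ᶜ)
  have hBm : ∀ e, MeasurableSet (B e) := by
    intro e
    refine MeasurableSet.iInter fun t => (hfm _).inter (hBorel _ (hfm _).compl)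
  have hBcover : ∀ x : X, ∃ e, x ∈ B e := by
    intro x
    have hsep : ∀ t : (↑(T.erase 1) : Finset G), ∃ p, x ∈ f p ∧ (t : G) • x ∉ f p := by
      intro t
      refine hfsep x _ fun h => ?_
      exact (Finset.mem_erase.mp t.2).1 (hfree _ _ h.symm)
    choose e he using hsep
    exact ⟨e, mem_iInter.mpr fun t => ⟨(he t).1, (he t).2⟩⟩
  have hBind : ∀ e, ∀ x ∈ B e, ∀ t ∈ T, t • x ∈ B e → t = 1 := by
    intro e x hx t ht hy
    by_contra h1
    have ht' : t ∈ T.erase 1 := Finset.mem_erase.mpr ⟨h1, ht⟩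
    have h1' := mem_iInter.mp hx ⟨t, ht'⟩
    have h2' := mem_iInter.mp hy ⟨t, ht'⟩
    exact h1'.2 h2'.1
  -- the greedy recursion
  let A : ℕ → Set X := fun n => B (g n)
  let U : ℕ → Set X := fun n =>
    Nat.rec ∅ (fun n Un => Un ∪ ((A n ∩ Y) \ {x | ∃ t ∈ T, t • x ∈ Un})) n
  have hUsucc : ∀ n, U (n + 1) = U n ∪ ((A n ∩ Y) \ {x | ∃ t ∈ T, t • x ∈ U n}) := fun n => rfl
  have hU0 : U 0 = ∅ := rfl
  have hUm : ∀ n, MeasurableSet (U n) := by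
    intro n
    induction n with
    | zero => exact MeasurableSet.empty
    | succ n ih =>
      rw [hUsucc]
      refine ih.union (((hBm _).inter hY).diff ?_)
      have heq : {x | ∃ t ∈ T, t • x ∈ U n} = ⋃ t ∈ T, (fun x => t • x) ⁻¹' U n := by
        ext x; simp
      rw [heq]
      exact MeasurableSet.biUnion T.countable_toSet fun t _ => hBorel t ih
  have hUmono : Monotone U := monotone_nat_of_le_succ fun n => by
    rw [hUsucc]; exact subset_union_left
  have hUY : ∀ n, U n ⊆ Y := by
    intro n
    induction n with
    | zero => rw [hU0]; exact empty_subset _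
    | succ n ih =>
      rw [hUsucc]
      exact union_subset ih (fun x hx => hx.1.2)
  set D : Set X := ⋃ n, U n with hD
  have hDstruct : ∀ x ∈ D, ∃ n, x ∈ A n ∧ x ∈ Y ∧ (∀ t ∈ T, t • x ∉ U n) ∧ x ∈ U (n + 1) := by
    intro x hx
    obtain ⟨m, hm⟩ := mem_iUnion.mp hx
    clear hx
    induction m with
    | zero => rw [hU0] at hm; exact absurd hm (notMem_empty x)
    | succ k ih =>
      rw [hUsucc] at hm
      rcases hm with h | h
      · exact ih h
      · exact ⟨k, h.1.1, h.1.2, fun t ht htx => h.2 ⟨t, ht, htx⟩,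
          by rw [hUsucc]; exact Or.inr h⟩
  -- key independence property
  have hkey : ∀ x ∈ D, ∀ t ∈ T, t • x ∈ D → t = 1 := by
    intro x hx t ht hy
    obtain ⟨n, hxA, _, hxN, hxU⟩ := hDstruct x hx
    obtain ⟨m, hyA, _, hyN, hyU⟩ := hDstruct (t • x) hy
    rcases lt_trichotomy m n with hlt | heq | hlt
    · exact absurd (hUmono hlt hyU) (hxN t ht)
    · rw [heq] at hyA
      exact hBind (g n) x hxA t ht hyA
    · have hx' : t⁻¹ • (t • x) ∈ U m := by
        rw [inv_smul_smul]
        exact hUmono hlt hxU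
      exact absurd hx' (hyN t⁻¹ (hTsymm t ht))
  refine ⟨D, MeasurableSet.iUnion hUm, iUnion_subset hUY, ?_, ?_⟩
  · intro y hyD y' hy'D hne s hs s' hs' heq
    have ht : s'⁻¹ * s ∈ T := by
      simp only [hT, Finset.mem_image, Finset.mem_product]
      exact ⟨⟨s, s'⟩, ⟨hs, hs'⟩, rfl⟩
    have hy' : (s'⁻¹ * s) • y = y' := by
      rw [mul_smul, heq, inv_smul_smul]
    have h1 : (s'⁻¹ * s) • y ∈ D := hy' ▸ hy'D
    have := hkey y hyD _ ht h1
    rw [this, one_smul] at hy'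
    exact hne hy'
  · intro y hyY hyD
    obtain ⟨e, he⟩ := hBcover y
    obtain ⟨n, rfl⟩ := hg e
    have hyU : y ∉ U (n + 1) := fun h => hyD (mem_iUnion.mpr ⟨n + 1, h⟩)
    rw [hUsucc] at hyU
    have hyUn : y ∉ U n := fun h => hyU (Or.inl h)
    have : ¬(y ∈ (A n ∩ Y) \ {x | ∃ t ∈ T, t • x ∈ U n}) := fun h => hyU (Or.inr h)
    rcases Classical.em (∃ t ∈ T, t • y ∈ U n) with hconf | hcn
    swap
    · exact absurd ⟨⟨he, hyY⟩, hcn⟩ this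
    obtain ⟨t, htT, htU⟩ := hconf
    simp only [hT, Finset.mem_image, Finset.mem_product] at htT
    obtain ⟨⟨s, s'⟩, ⟨hs, hs'⟩, rfl⟩ := htT
    refine ⟨(s'⁻¹ * s) • y, mem_iUnion.mpr ⟨n, htU⟩, s, hs, s', hs', ?_⟩
    rw [smul_smul, mul_inv_cancel_left]
end

section
/- Let G be a countably infinite group, let B, C ⊆ G be finite sets, and let r > 0 be a real number. Then there exist finite sets Λ ⊆ F ⊆ G such that: (i) C ⊆ F; (ii) B·Λ ⊆ F; (iii) B·λ ∩ B·λ' = ∅ for all distinct λ, λ' ∈ Λ; (iv) B·Λ ∩ C = ∅; and (v) |Λ| ≥ log₂(r·|F|²) + r. -/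
open MeasureTheory Set
open scoped Pointwise

lemma counting_lemma_aux
    {G : Type*} [Group G] [Infinite G] [DecidableEq G]
    (B C : Finset G) (n : ℕ) :
    ∃ Λ : Finset G, Λ.card = n ∧
      (∀ l ∈ Λ, ∀ l' ∈ Λ, l ≠ l' → ∀ b ∈ B, ∀ b' ∈ B, b * l ≠ b' * l') ∧
      (∀ b ∈ B, ∀ l ∈ Λ, b * l ∉ C) := by
  induction n with
  | zero => exact ⟨∅, rfl, by simp, by simp⟩
  | succ n ih =>
    obtain ⟨Λ, hcard, hdisj, hC⟩ := ih
    obtain ⟨x, hx⟩ := Infinite.exists_notMem_finset (Λ ∪ B⁻¹ * (C ∪ B * Λ))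
    have hxΛ : x ∉ Λ := fun h => hx (Finset.mem_union_left _ h)
    have hxkey : ∀ b ∈ B, b * x ∉ C ∪ B * Λ := by
      intro b hb hmem
      exact hx (Finset.mem_union_right _ (Finset.mem_mul.mpr
        ⟨b⁻¹, Finset.inv_mem_inv hb, b * x, hmem, by group⟩))
    refine ⟨insert x Λ, by rw [Finset.card_insert_of_notMem hxΛ, hcard], ?_, ?_⟩
    · have key : ∀ b ∈ B, ∀ c ∈ B, ∀ m ∈ Λ, b * x ≠ c * m := by
        intro b hb c hc m hm h
        exact hxkey b hb (Finset.mem_union_right _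
          (Finset.mem_mul.mpr ⟨c, hc, m, hm, h.symm⟩))
      intro l hl l' hl' hne b hb b' hb' heq
      rcases Finset.mem_insert.mp hl with hlx | hl
      · rcases Finset.mem_insert.mp hl' with hlx' | hl'
        · exact hne (hlx.trans hlx'.symm)
        · exact key b hb b' hb' l' hl' (hlx ▸ heq)
      · rcases Finset.mem_insert.mp hl' with hlx' | hl'
        · exact key b' hb' b hb l hl (hlx' ▸ heq.symm)
        · exact hdisj l hl l' hl' hne b hb b' hb' heq
    · intro b hb l hl
      rcases Finset.mem_insert.mp hl with rfl | hl
      · exact fun h => hxkey b hb (Finset.mem_union_left _ h)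
      · exact hC b hb l hl

lemma logb_two_le_three_sqrt {x : ℝ} (hx : 1 ≤ x) :
    Real.logb 2 x ≤ 3 * Real.sqrt x := by
  have hx0 : 0 < x := lt_of_lt_of_le one_pos hx
  have hs : 0 < Real.sqrt x := Real.sqrt_pos.mpr hx0
  have h1 : Real.log x ≤ 2 * Real.sqrt x := by
    have := Real.log_le_sub_one_of_pos hs
    rw [Real.log_sqrt hx0.le] at this
    nlinarith
  have h2 : (0.6931471803 : ℝ) < Real.log 2 := Real.log_two_gt_d9
  rw [Real.logb, div_le_iff₀ (by linarith)]
  nlinarith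

/-- Lemma 4.1 (counting lemma): for finite `B, C ⊆ G` in a countably infinite group and
`r > 0` there are finite sets `Λ ⊆ F ⊆ G` with (i) `C ⊆ F`, (ii) `B·Λ ⊆ F`,
(iii) the translates `B·λ`, `λ ∈ Λ`, pairwise disjoint, (iv) `B·Λ ∩ C = ∅`, and
(v) `|Λ| ≥ log₂ (r·|F|²) + r`. -/
theorem counting_lemma
    {G : Type*} [Group G] [Countable G] [Infinite G] [DecidableEq G]
    (B C : Finset G) (r : ℝ) (hr : 0 < r) :
    ∃ Λ F : Finset G, Λ ⊆ F ∧
      C ⊆ F ∧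
      B * Λ ⊆ F ∧
      (∀ l ∈ Λ, ∀ l' ∈ Λ, l ≠ l' → ∀ b ∈ B, ∀ b' ∈ B, b * l ≠ b' * l') ∧
      (∀ b ∈ B, ∀ l ∈ Λ, b * l ∉ C) ∧
      Real.logb 2 (r * (F.card : ℝ) ^ 2) + r ≤ (Λ.card : ℝ) := by
  classical
  set K : ℝ := C.card + B.card + 1 with hK
  have hK1 : 1 ≤ K := by
    have h1 := Nat.cast_nonneg (α := ℝ) C.card
    have h2 := Nat.cast_nonneg (α := ℝ) B.card
    rw [hK]; linarith
  have hK0 : 0 < K := lt_of_lt_of_le one_pos hK1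
  set A : ℝ := Real.logb 2 (r * K ^ 2) + r with hA
  set n : ℕ := max 144 ⌈2 * A⌉₊ with hn
  have hn144 : (144 : ℕ) ≤ n := le_max_left _ _
  have hnR : (144 : ℝ) ≤ (n : ℝ) := by exact_mod_cast hn144
  have hn1 : 1 ≤ (n : ℝ) := by linarith
  have hn0 : (0 : ℝ) < n := by linarith
  have hnA : 2 * A ≤ (n : ℝ) := le_trans (Nat.le_ceil _) (by exact_mod_cast le_max_right 144 ⌈2 * A⌉₊)
  obtain ⟨Λ, hcard, hdisj, hC⟩ := counting_lemma_aux B C n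
  refine ⟨Λ, C ∪ B * Λ ∪ Λ, ?_, ?_, ?_, hdisj, hC, ?_⟩
  · exact Finset.subset_union_right
  · exact Finset.subset_union_left.trans Finset.subset_union_left
  · exact Finset.subset_union_right.trans Finset.subset_union_left
  -- the counting estimate
  set F : Finset G := C ∪ B * Λ ∪ Λ with hF
  have hFcard : (F.card : ℝ) ≤ K * n := by
    have h1 : F.card ≤ C.card + B.card * Λ.card + Λ.card := by
      calc F.card ≤ (C ∪ B * Λ).card + Λ.card := Finset.card_union_le _ _
        _ ≤ C.card + (B * Λ).card + Λ.card := by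
            exact add_le_add_left (Finset.card_union_le _ _) _
        _ ≤ C.card + B.card * Λ.card + Λ.card := by
            exact add_le_add_left (add_le_add_right Finset.card_mul_le _) _
    have h2 : (F.card : ℝ) ≤ (C.card : ℝ) + B.card * n + n := by
      rw [← hcard]; exact_mod_cast h1
    have : (C.card : ℝ) + B.card * n + n ≤ K * n := by
      rw [hK]
      nlinarith [Nat.cast_nonneg (α := ℝ) C.card, Nat.cast_nonneg (α := ℝ) B.card]
    linarith
  have hF1 : (1 : ℝ) ≤ (F.card : ℝ) := by
    have : Λ.card ≤ F.card := Finset.card_le_card Finset.subset_union_right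
    have : (n : ℝ) ≤ (F.card : ℝ) := by rw [← hcard]; exact_mod_cast this
    linarith
  rw [hcard]
  have hmono : Real.logb 2 (r * (F.card : ℝ) ^ 2) ≤ Real.logb 2 (r * (K * n) ^ 2) := by
    have h2 : (0:ℝ) < r * (F.card : ℝ) ^ 2 :=
      mul_pos hr (pow_pos (by linarith) 2)
    have h3 : (0:ℝ) < r * (K * n) ^ 2 :=
      mul_pos hr (pow_pos (mul_pos hK0 hn0) 2)
    rw [Real.logb_le_logb one_lt_two h2 h3]
    have h4 : (F.card : ℝ) ^ 2 ≤ (K * n) ^ 2 :=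
      pow_le_pow_left₀ (by linarith) hFcard 2
    exact mul_le_mul_of_nonneg_left h4 hr.le
  have hsplit : Real.logb 2 (r * (K * n) ^ 2) = Real.logb 2 (r * K ^ 2) + 2 * Real.logb 2 n := by
    have : r * (K * n) ^ 2 = (r * K ^ 2) * (n : ℝ) ^ 2 := by ring
    rw [this, Real.logb_mul (mul_pos hr (pow_pos hK0 2)).ne' (pow_pos hn0 2).ne', Real.logb_pow]
    norm_num
  have hlog : Real.logb 2 (n : ℝ) ≤ 3 * Real.sqrt n := logb_two_le_three_sqrt hn1
  have hsqrt : Real.sqrt (n : ℝ) ≤ (n : ℝ) / 12 := by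
    have h12 : Real.sqrt (n : ℝ) ≤ Real.sqrt (((n : ℝ) / 12) ^ 2) := by
      apply Real.sqrt_le_sqrt; nlinarith
    rwa [Real.sqrt_sq (by positivity)] at h12
  -- combine
  have : Real.logb 2 (r * (F.card : ℝ) ^ 2) + r ≤ A + 2 * Real.logb 2 n := by
    rw [hA]; linarith [hmono, hsplit.le, hsplit.ge]
  have h6 : 2 * Real.logb 2 (n : ℝ) ≤ (n : ℝ) / 2 := by
    have := hsqrt
    linarith [hlog]
  linarith [hnA]
end

section
/- Let G be a countable group, let G ↷ Y be a Borel action of G on a standard Borel space Y, let ν be a Borel probability measure on Y, and let P be a countable generating partition for G ↷ (Y, ν). Then for every g ∈ G, ν(Fix_Y(g)) = inf { Σ_{P ∈ P^Q} ν(g·P ∩ P) : Q ⊆ G finite }, where P^Q denotes the common refinement ⋁_{h ∈ Q} h·P and Fix_Y(g) = {y ∈ Y : g·y = y}. -/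
open MeasureTheory Set
open scoped ENNReal Pointwise

/-- Lemma 4.3: if `P` is a countable generating partition for a Borel action `G ↷ (Y, ν)`
(generating on some `G`-invariant conull set), then for every `g ∈ G`,
`ν (Fix_Y g) = inf { Σ_{P ∈ P^Q} ν (g • P ∩ P) : Q ⊆ G finite }`, where `P^Q` is the common
refinement `⋁_{h ∈ Q} h • P`, whose pieces are the sets `⋂_{h ∈ Q} h • P (σ h)` for
`σ : Q → ℕ`. -/
theorem measure_fixed_points_eq_iInf
    {G : Type*} [Group G] [Countable G]
    {Y : Type*} [MeasurableSpace Y] [StandardBorelSpace Y] [MulAction G Y]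
    (hBorel : ∀ g : G, Measurable fun y : Y => g • y)
    (ν : Measure Y) [IsProbabilityMeasure ν]
    (P : ℕ → Set Y)
    (hPmeas : ∀ n, MeasurableSet (P n))
    (hPdisj : ∀ m n : ℕ, m ≠ n → Disjoint (P m) (P n))
    (hPcover : (⋃ n, P n) = Set.univ)
    (hPgen : ∃ Y₀ : Set Y, MeasurableSet Y₀ ∧ (∀ g : G, g • Y₀ ⊆ Y₀) ∧ ν Y₀ᶜ = 0 ∧
      ∀ y ∈ Y₀, ∀ y' ∈ Y₀, y ≠ y' →
        ∃ (g : G) (n : ℕ), g • y ∈ P n ∧ g • y' ∉ P n)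
    (g : G) :
    ν {y : Y | g • y = y} =
      ⨅ Q : Finset G, ∑' σ : (Q → ℕ),
        ν ((g • ⋂ h : Q, (h : G) • P (σ h)) ∩ ⋂ h : Q, (h : G) • P (σ h)) := by
  classical
  -- pieces of the refinement
  set A : (Q : Finset G) → (Q → ℕ) → Set Y :=
    fun Q σ => ⋂ h : Q, (h : G) • P (σ h) with hA
  -- basic membership description
  have memA : ∀ (Q : Finset G) (σ : Q → ℕ) (y : Y),
      y ∈ A Q σ ↔ ∀ h : Q, (h : G)⁻¹ • y ∈ P (σ h) := by
    intro Q σ y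
    simp [hA, Set.mem_iInter, Set.mem_smul_set_iff_inv_smul_mem]
  -- smul images of measurable sets are measurable
  have hsmulMeas : ∀ (h : G) (S : Set Y), MeasurableSet S → MeasurableSet (h • S) := by
    intro h S hS
    have : h • S = (fun y : Y => h⁻¹ • y) ⁻¹' S := by
      ext y; simp [Set.mem_smul_set_iff_inv_smul_mem]
    rw [this]
    exact hBorel h⁻¹ hS
  have hAmeas : ∀ (Q : Finset G) (σ : Q → ℕ), MeasurableSet (A Q σ) := by
    intro Q σ
    exact MeasurableSet.iInter fun h => hsmulMeas _ _ (hPmeas _)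
  -- the pieces are pairwise disjoint
  have hAdisj : ∀ (Q : Finset G), Pairwise fun σ σ' : Q → ℕ => Disjoint (A Q σ) (A Q σ') := by
    intro Q σ σ' hne
    obtain ⟨h, hh⟩ := Function.ne_iff.mp hne
    rw [Set.disjoint_left]
    intro y hy hy'
    exact Set.disjoint_left.mp (hPdisj _ _ hh)
      ((memA Q σ y).mp hy h) ((memA Q σ' y).mp hy' h)
  -- the union of the "diagonal" pieces
  set D : Finset G → Set Y := fun Q => ⋃ σ : Q → ℕ, (g • A Q σ ∩ A Q σ) with hD
  have memgA : ∀ (Q : Finset G) (σ : Q → ℕ) (y : Y),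
      y ∈ g • A Q σ ↔ g⁻¹ • y ∈ A Q σ := by
    intro Q σ y; exact Set.mem_smul_set_iff_inv_smul_mem
  -- characterization of membership in D Q
  have memD : ∀ (Q : Finset G) (y : Y),
      y ∈ D Q ↔ ∀ h ∈ Q, ∃ n, h⁻¹ • y ∈ P n ∧ h⁻¹ • (g⁻¹ • y) ∈ P n := by
    intro Q y
    constructor
    · rintro hy h hh
      obtain ⟨σ, hy⟩ := Set.mem_iUnion.mp hy
      exact ⟨σ ⟨h, hh⟩, (memA Q σ y).mp hy.2 ⟨h, hh⟩,
        (memA Q σ _).mp ((memgA Q σ y).mp hy.1) ⟨h, hh⟩⟩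
    · intro H
      refine Set.mem_iUnion.mpr ⟨fun h => (H h h.2).choose, ?_, ?_⟩
      · exact (memgA _ _ y).mpr <| (memA _ _ _).mpr fun h => (H h h.2).choose_spec.2
      · exact (memA _ _ y).mpr fun h => (H h h.2).choose_spec.1
  -- every point lies in some piece
  have hcover : ∀ (Q : Finset G) (y : Y), ∀ h : G, ∃ n, h⁻¹ • y ∈ P n := by
    intro Q y h
    have := hPcover.symm ▸ Set.mem_univ (h⁻¹ • y)
    exact Set.mem_iUnion.mp this
  -- the sum over pieces is the measure of D Q
  have hsum : ∀ Q : Finset G,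
      ∑' σ : (Q → ℕ), ν (g • A Q σ ∩ A Q σ) = ν (D Q) := by
    intro Q
    refine (measure_iUnion ?_ ?_).symm
    · intro σ σ' hne
      exact (hAdisj Q hne).mono inter_subset_right inter_subset_right
    · intro σ
      exact (hsmulMeas g _ (hAmeas Q σ)).inter (hAmeas Q σ)
  refine le_antisymm (le_iInf fun Q => ?_) ?_
  · -- Fix ⊆ D Q
    rw [show (∑' σ : (Q → ℕ),
        ν ((g • ⋂ h : Q, (h : G) • P (σ h)) ∩ ⋂ h : Q, (h : G) • P (σ h)))
        = ν (D Q) from hsum Q]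
    refine measure_mono fun y hy => ?_
    have hfix : g • y = y := hy
    have hfix' : g⁻¹ • y = y := inv_smul_eq_iff.mpr hfix.symm
    rw [memD]
    intro h hh
    obtain ⟨n, hn⟩ := hcover Q y h
    exact ⟨n, hn, by rwa [hfix']⟩
  · -- the hard direction : inf ≤ ν Fix
    obtain ⟨Y₀, hY₀meas, hY₀inv, hY₀null, hY₀gen⟩ := hPgen
    obtain ⟨e, he⟩ := exists_surjective_nat G
    set Q : ℕ → Finset G := fun n => (Finset.range (n + 1)).image e with hQ
    have hQmono : Monotone Q := fun m n hmn =>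
      Finset.image_subset_image (Finset.range_subset_range.mpr (by omega))
    have hDanti : ∀ m n, m ≤ n → D (Q n) ⊆ D (Q m) := by
      intro m n hmn y hy
      rw [memD] at hy ⊢
      exact fun h hh => hy h (hQmono hmn hh)
    -- the intersection is contained in Fix ∪ Y₀ᶜ
    have hsubset : (⋂ n, D (Q n)) ⊆ {y : Y | g • y = y} ∪ Y₀ᶜ := by
      intro y hy
      by_cases hy₀ : y ∈ Y₀
      · left
        by_contra hfix
        have hy' : g⁻¹ • y ∈ Y₀ := hY₀inv g⁻¹ ⟨y, hy₀, rfl⟩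
        have hne : y ≠ g⁻¹ • y := by
          intro hcontra
          refine hfix (show g • y = y from ?_)
          conv_lhs => rw [hcontra, smul_inv_smul]
        obtain ⟨h, n, h1, h2⟩ := hY₀gen y hy₀ _ hy' hne
        obtain ⟨k, hk⟩ := he h⁻¹
        have hmem : h⁻¹ ∈ Q k := Finset.mem_image.mpr ⟨k, Finset.self_mem_range_succ k, hk⟩
        have := (memD (Q k) y).mp (Set.mem_iInter.mp hy k) h⁻¹ hmem
        obtain ⟨n', hn1, hn2⟩ := this
        rw [inv_inv] at hn1 hn2
        have : n' = n := by
          by_contra hne'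
          exact Set.disjoint_left.mp (hPdisj n' n hne') hn1 h1
        exact h2 (this ▸ hn2)
      · right; exact hy₀
    have hDmeas : ∀ n, MeasurableSet (D (Q n)) := by
      intro n
      exact MeasurableSet.iUnion fun σ => (hsmulMeas g _ (hAmeas _ σ)).inter (hAmeas _ σ)
    have hiInter : ν (⋂ n, D (Q n)) = ⨅ n, ν (D (Q n)) := by
      refine Directed.measure_iInter (fun n => (hDmeas n).nullMeasurableSet) ?_ ?_
      · intro m n
        exact ⟨max m n, hDanti m (max m n) (le_max_left _ _),
          hDanti n (max m n) (le_max_right _ _)⟩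
      · exact ⟨0, measure_ne_top ν _⟩
    calc
      (⨅ Q' : Finset G, ∑' σ : (Q' → ℕ),
          ν ((g • ⋂ h : Q', (h : G) • P (σ h)) ∩ ⋂ h : Q', (h : G) • P (σ h)))
          ≤ ⨅ n, ν (D (Q n)) := le_iInf fun n => (iInf_le _ (Q n)).trans_eq (hsum (Q n))
      _ = ν (⋂ n, D (Q n)) := hiInter.symm
      _ ≤ ν ({y : Y | g • y = y} ∪ Y₀ᶜ) := measure_mono hsubset
      _ ≤ ν {y : Y | g • y = y} + ν Y₀ᶜ := measure_union_le _ _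
      _ = ν {y : Y | g • y = y} := by rw [hY₀null, add_zero]
end
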